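/- arXiv:0811.2936 — 4 statements merged into one kernel-verified Lean document; each statement's English description precedes it below -/
import Mathlib

section
/- The (−1)-classes of the dP_8 lattice are exactly the vectors of the following seven types, with the indicated counts: e_i (8 classes); l − e_i − e_j with i < j (28 classes); 2l − e_{i_1} − ⋯ − e_{i_5} over 5-element index sets (56 classes); 3l − 2e_i − Σ_{j∈S} e_j with S a 6-element set not containing i (56 classes); 4l − 2e_{i_1} − 2e_{i_2} − 2e_{i_3} − Σ_{j∈S} e_j with S the complementary 5-element set (56 classes); 5l − 2Σ_{j∈S} e_j − e_{k_1} − e_{k_2} with S a 6-element set and {k_1,k_2} its complement (28 classes); and 6l − 3e_i − 2Σ_{j≠i} e_j (8 classes); in total 240 classes. -/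
namespace Stmt3

/-- Intersection form of the dP₈ lattice `ℤ⁹` with basis `l, e₁, …, e₈`. -/
def dot (x y : Fin 9 → ℤ) : ℤ := x 0 * y 0 - ∑ i : Fin 8, x i.succ * y i.succ

/-- The canonical class `K = -3l + e₁ + ⋯ + e₈`. -/
def K : Fin 9 → ℤ := fun i => if i = 0 then -3 else 1

/-- The hyperplane class `l`. -/
def l : Fin 9 → ℤ := Pi.single 0 1

/-- The exceptional class `e_{j+1}` (`j : Fin 8` zero-based). -/
def e (j : Fin 8) : Fin 9 → ℤ := Pi.single j.succ 1

/-- The set of (−1)-classes of the dP₈ lattice. -/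
def N : Set (Fin 9 → ℤ) := {v | dot v v = -1 ∧ dot v K = -1}

/-- Type 1: `e_i`. -/
def T1 : Set (Fin 9 → ℤ) := {v | ∃ i : Fin 8, v = e i}

/-- Type 2: `l - e_i - e_j` with `i < j`. -/
def T2 : Set (Fin 9 → ℤ) := {v | ∃ i j : Fin 8, i < j ∧ v = l - e i - e j}

/-- Type 3: `2l - e_{i₁} - ⋯ - e_{i₅}` over 5-element index sets. -/
def T3 : Set (Fin 9 → ℤ) :=
  {v | ∃ S : Finset (Fin 8), S.card = 5 ∧ v = (2 : ℤ) • l - ∑ i ∈ S, e i}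

/-- Type 4: `3l - 2e_i - ∑_{j∈S} e_j` with `S` a 6-element set not containing `i`. -/
def T4 : Set (Fin 9 → ℤ) :=
  {v | ∃ (i : Fin 8) (S : Finset (Fin 8)), S.card = 6 ∧ i ∉ S ∧
    v = (3 : ℤ) • l - (2 : ℤ) • e i - ∑ j ∈ S, e j}

/-- Type 5: `4l - 2e_{i₁} - 2e_{i₂} - 2e_{i₃} - ∑_{j∈S} e_j` with `S` the complementary
5-element set. -/
def T5 : Set (Fin 9 → ℤ) :=
  {v | ∃ I : Finset (Fin 8), I.card = 3 ∧
    v = (4 : ℤ) • l - (2 : ℤ) • (∑ i ∈ I, e i) - ∑ j ∈ Iᶜ, e j}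

/-- Type 6: `5l - 2∑_{j∈S} e_j - e_{k₁} - e_{k₂}` with `S` a 6-element set and
`{k₁, k₂}` its complement. -/
def T6 : Set (Fin 9 → ℤ) :=
  {v | ∃ S : Finset (Fin 8), S.card = 6 ∧
    v = (5 : ℤ) • l - (2 : ℤ) • (∑ j ∈ S, e j) - ∑ k ∈ Sᶜ, e k}

/-- Type 7: `6l - 3e_i - 2∑_{j≠i} e_j`. -/
def T7 : Set (Fin 9 → ℤ) :=
  {v | ∃ i : Fin 8, v = (6 : ℤ) • l - (3 : ℤ) • e i - (2 : ℤ) • (∑ j ∈ ({i}ᶜ : Finset (Fin 8)), e j)}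

open Finset

def ind (p : Prop) [Decidable p] : ℤ := if p then 1 else 0

lemma ind_pos {p : Prop} [Decidable p] (h : p) : ind p = 1 := if_pos h
lemma ind_neg {p : Prop} [Decidable p] (h : ¬ p) : ind p = 0 := if_neg h
lemma ind_cases (p : Prop) [Decidable p] : (p ∧ ind p = 1) ∨ (¬ p ∧ ind p = 0) := by
  by_cases h : p
  · exact Or.inl ⟨h, if_pos h⟩
  · exact Or.inr ⟨h, if_neg h⟩

lemma l_zero : l 0 = 1 := by simp [l]
lemma l_succ (j : Fin 8) : l j.succ = 0 := Pi.single_eq_of_ne (Fin.succ_ne_zero j) 1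
lemma e_zero (k : Fin 8) : e k 0 = 0 := Pi.single_eq_of_ne (Fin.succ_ne_zero k).symm 1
lemma e_succ (k j : Fin 8) : e k j.succ = ind (j = k) := by
  simp [e, Pi.single_apply, ind, Fin.succ_inj]

lemma sum_e_zero (S : Finset (Fin 8)) : (∑ k ∈ S, e k) 0 = 0 := by
  rw [Finset.sum_apply]; simp [e_zero]

lemma sum_e_succ (S : Finset (Fin 8)) (j : Fin 8) : (∑ k ∈ S, e k) j.succ = ind (j ∈ S) := by
  rw [Finset.sum_apply]; simp [e_succ, ind]

lemma K_zero : K 0 = -3 := rfl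
lemma K_succ (j : Fin 8) : K j.succ = 1 := by simp [K, Fin.succ_ne_zero]

lemma sum_ind_eq (i : Fin 8) : ∑ j : Fin 8, ind (j = i) = 1 := by simp [ind]

lemma sum_ind_mem (S : Finset (Fin 8)) : ∑ j : Fin 8, ind (j ∈ S) = S.card := by
  simp [ind, Finset.sum_boole]

/-- canonical vector from head + tail -/
def vp (a : ℤ) (b : Fin 8 → ℤ) : Fin 9 → ℤ := Fin.cases a b

@[simp] lemma vp_zero (a : ℤ) (b : Fin 8 → ℤ) : vp a b 0 = a := rfl
@[simp] lemma vp_succ (a : ℤ) (b : Fin 8 → ℤ) (j : Fin 8) : vp a b j.succ = b j := by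
  simp [vp]

/-- shape-A vectors -/
def gA (a u w : ℤ) (S : Finset (Fin 8)) : Fin 9 → ℤ := vp a (fun j => u * ind (j ∈ S) + w)
/-- shape-B vectors (type 4) -/
def gB (i : Fin 8) (S : Finset (Fin 8)) : Fin 9 → ℤ :=
  vp 3 (fun j => -2 * ind (j = i) + (-1) * ind (j ∈ S))

lemma vec_eq_iff (v w : Fin 9 → ℤ) : v = w ↔ (v 0 = w 0 ∧ ∀ j : Fin 8, v j.succ = w j.succ) := by
  constructor
  · rintro rfl; exact ⟨rfl, fun _ => rfl⟩
  · rintro ⟨h0, hs⟩; funext x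
    induction x using Fin.cases with
    | zero => exact h0
    | succ j => exact hs j

lemma dot_self (v : Fin 9 → ℤ) : dot v v = (v 0)^2 - ∑ j : Fin 8, (v j.succ)^2 := by
  simp [dot, sq]

lemma dot_K (v : Fin 9 → ℤ) : dot v K = -3 * (v 0) - ∑ j : Fin 8, v j.succ := by
  have h : ∀ j : Fin 8, v j.succ * K j.succ = v j.succ := fun j => by rw [K_succ, mul_one]
  unfold dot
  rw [Finset.sum_congr rfl (fun j _ => h j), K_zero]
  ring

lemma sum_gA (a u w : ℤ) (S : Finset (Fin 8)) :
    ∑ j : Fin 8, gA a u w S j.succ = u * S.card + 8 * w := by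
  simp only [gA, vp_succ]
  rw [Finset.sum_add_distrib, ← Finset.mul_sum, sum_ind_mem]
  simp only [Finset.sum_const, Finset.card_univ, Fintype.card_fin, nsmul_eq_mul]
  push_cast; ring

lemma sumsq_gA (a u w : ℤ) (S : Finset (Fin 8)) :
    ∑ j : Fin 8, (gA a u w S j.succ)^2 = ((u+w)^2 - w^2) * S.card + 8 * w^2 := by
  simp only [gA, vp_succ]
  have h : ∀ j : Fin 8, (u * ind (j ∈ S) + w)^2
      = ((u+w)^2 - w^2) * ind (j ∈ S) + w^2 := by
    intro j
    rcases ind_cases (j ∈ S) with ⟨_, h⟩ | ⟨_, h⟩ <;> rw [h] <;> ring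
  rw [Finset.sum_congr rfl (fun j _ => h j), Finset.sum_add_distrib, ← Finset.mul_sum,
    sum_ind_mem]
  simp only [Finset.sum_const, Finset.card_univ, Fintype.card_fin, nsmul_eq_mul]
  push_cast; ring

lemma sum_gB (i : Fin 8) (S : Finset (Fin 8)) :
    ∑ j : Fin 8, gB i S j.succ = -2 - S.card := by
  simp only [gB, vp_succ]
  rw [Finset.sum_add_distrib, ← Finset.mul_sum, ← Finset.mul_sum, sum_ind_mem, sum_ind_eq]
  ring

lemma sumsq_gB (i : Fin 8) (S : Finset (Fin 8)) (hiS : i ∉ S) :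
    ∑ j : Fin 8, (gB i S j.succ)^2 = 4 + S.card := by
  simp only [gB, vp_succ]
  have h : ∀ j : Fin 8, (-2 * ind (j = i) + (-1) * ind (j ∈ S))^2
      = 4 * ind (j = i) + 1 * ind (j ∈ S) := by
    intro j
    rcases ind_cases (j = i) with ⟨h1, e1⟩ | ⟨h1, e1⟩ <;>
      rcases ind_cases (j ∈ S) with ⟨h2, e2⟩ | ⟨h2, e2⟩ <;> rw [e1, e2] <;> try ring
    exact absurd (h1 ▸ h2) hiS
  rw [Finset.sum_congr rfl (fun j _ => h j), Finset.sum_add_distrib, ← Finset.mul_sum,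
    ← Finset.mul_sum, sum_ind_mem, sum_ind_eq]
  ring

lemma coords1 (i : Fin 8) : e i = gA 0 1 0 {i} := by
  rw [vec_eq_iff]
  refine ⟨by simp [e_zero, gA], fun j => ?_⟩
  simp only [gA, vp_succ, e_succ, Finset.mem_singleton]
  ring

lemma coords2 (i k : Fin 8) (h : i ≠ k) : l - e i - e k = gA 1 (-1) 0 {i, k} := by
  rw [vec_eq_iff]
  constructor
  · simp [l_zero, e_zero, gA]
  · intro j
    simp only [Pi.sub_apply, l_succ, e_succ, gA, vp_succ, Finset.mem_insert,
      Finset.mem_singleton]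
    rcases ind_cases (j = i) with ⟨h1, e1⟩ | ⟨h1, e1⟩ <;>
      rcases ind_cases (j = k) with ⟨h2, e2⟩ | ⟨h2, e2⟩
    · exact absurd (h1 ▸ h2.symm ▸ rfl) h
    · rw [e1, e2, ind_pos (Or.inl h1)]; ring
    · rw [e1, e2, ind_pos (Or.inr h2)]; ring
    · rw [e1, e2, ind_neg (by tauto)]; ring

lemma coords3 (S : Finset (Fin 8)) : (2 : ℤ) • l - ∑ i ∈ S, e i = gA 2 (-1) 0 S := by
  rw [vec_eq_iff]
  constructor
  · simp [l_zero, sum_e_zero, e_zero, gA]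
  · intro j
    simp only [Pi.sub_apply, Pi.smul_apply, smul_eq_mul, l_succ, sum_e_succ, gA, vp_succ]
    ring

lemma coords4 (i : Fin 8) (S : Finset (Fin 8)) :
    (3 : ℤ) • l - (2 : ℤ) • e i - ∑ j ∈ S, e j = gB i S := by
  rw [vec_eq_iff]
  constructor
  · simp [l_zero, e_zero, sum_e_zero, gB]
  · intro j
    simp only [Pi.sub_apply, Pi.smul_apply, smul_eq_mul, l_succ, e_succ, sum_e_succ, gB, vp_succ]
    ring

lemma ind_compl (S : Finset (Fin 8)) (j : Fin 8) : ind (j ∈ Sᶜ) = 1 - ind (j ∈ S) := by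
  rcases ind_cases (j ∈ S) with ⟨h, e⟩ | ⟨h, e⟩
  · rw [e, ind_neg (by simp [h])]; norm_num
  · rw [e, ind_pos (by simp [h])]; norm_num

lemma coords5 (I : Finset (Fin 8)) :
    (4 : ℤ) • l - (2 : ℤ) • (∑ i ∈ I, e i) - ∑ j ∈ Iᶜ, e j = gA 4 (-1) (-1) I := by
  rw [vec_eq_iff]
  constructor
  · simp [l_zero, sum_e_zero, e_zero, gA]
  · intro j
    simp only [Pi.sub_apply, Pi.smul_apply, smul_eq_mul, l_succ, sum_e_succ, gA, vp_succ]
    rw [ind_compl]; ring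

lemma coords6 (S : Finset (Fin 8)) :
    (5 : ℤ) • l - (2 : ℤ) • (∑ j ∈ S, e j) - ∑ k ∈ Sᶜ, e k = gA 5 (-1) (-1) S := by
  rw [vec_eq_iff]
  constructor
  · simp [l_zero, sum_e_zero, e_zero, gA]
  · intro j
    simp only [Pi.sub_apply, Pi.smul_apply, smul_eq_mul, l_succ, sum_e_succ, gA, vp_succ]
    rw [ind_compl]; ring

lemma coords7 (i : Fin 8) :
    (6 : ℤ) • l - (3 : ℤ) • e i - (2 : ℤ) • (∑ j ∈ ({i}ᶜ : Finset (Fin 8)), e j)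
      = gA 6 (-1) (-2) {i} := by
  rw [vec_eq_iff]
  constructor
  · simp [l_zero, e_zero, sum_e_zero, gA]
    try norm_num [e_zero]
  · intro j
    simp only [Pi.sub_apply, Pi.smul_apply, smul_eq_mul, l_succ, e_succ, sum_e_succ, gA, vp_succ]
    rw [ind_compl]
    simp only [Finset.mem_singleton]
    ring

lemma dot_gA_self (a u w : ℤ) (S : Finset (Fin 8)) :
    dot (gA a u w S) (gA a u w S) = a^2 - (((u+w)^2 - w^2) * S.card + 8 * w^2) := by
  rw [dot_self, sumsq_gA]; simp [gA]

lemma dot_gA_K (a u w : ℤ) (S : Finset (Fin 8)) :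
    dot (gA a u w S) K = -3 * a - (u * S.card + 8 * w) := by
  rw [dot_K, sum_gA]; simp [gA]

lemma dot_gB_self (i : Fin 8) (S : Finset (Fin 8)) (hiS : i ∉ S) :
    dot (gB i S) (gB i S) = 9 - (4 + S.card) := by
  rw [dot_self, sumsq_gB i S hiS]; simp [gB]

lemma dot_gB_K (i : Fin 8) (S : Finset (Fin 8)) :
    dot (gB i S) K = -9 - (-2 - S.card) := by
  rw [dot_K, sum_gB]; simp [gB]

lemma valm1 (x : ℤ) (h : (4 - x)^2 ≤ 7 * (2 - x^2)) : False := by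
  have h1 : 0 ≤ x := by nlinarith [sq_nonneg x, sq_nonneg (x+1)]
  have h2 : x ≤ 1 := by nlinarith [sq_nonneg (x-1), sq_nonneg (x-2)]
  interval_cases x <;> norm_num at h

lemma val0 (x : ℤ) (h : (1 - x)^2 ≤ 7 * (1 - x^2)) : x = 0 ∨ x = 1 := by
  have h1 : -1 ≤ x := by nlinarith [sq_nonneg (x+1), sq_nonneg x]
  have h2 : x ≤ 2 := by nlinarith [sq_nonneg (x-1), sq_nonneg (x-2)]
  interval_cases x <;> first | omega | norm_num at h

lemma val1 (x : ℤ) (h : (-2 - x)^2 ≤ 7 * (2 - x^2)) : x = -1 ∨ x = 0 := by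
  have h1 : -2 ≤ x := by nlinarith [sq_nonneg (x+1), sq_nonneg (x+2)]
  have h2 : x ≤ 1 := by nlinarith [sq_nonneg (x-1), sq_nonneg x]
  interval_cases x <;> first | omega | norm_num at h

lemma val2 (x : ℤ) (h : (-5 - x)^2 ≤ 7 * (5 - x^2)) : x = -1 ∨ x = 0 := by
  have h1 : -2 ≤ x := by nlinarith [sq_nonneg (x+1), sq_nonneg (x+2)]
  have h2 : x ≤ 1 := by nlinarith [sq_nonneg (x-1), sq_nonneg x]
  interval_cases x <;> first | omega | norm_num at h

lemma val3 (x : ℤ) (h : (-8 - x)^2 ≤ 7 * (10 - x^2)) : x = -2 ∨ x = -1 ∨ x = 0 := by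
  have h1 : -3 ≤ x := by nlinarith [sq_nonneg (x+2), sq_nonneg (x+3)]
  have h2 : x ≤ 1 := by nlinarith [sq_nonneg x, sq_nonneg (x-1)]
  interval_cases x <;> first | omega | norm_num at h

lemma val4 (x : ℤ) (h : (-11 - x)^2 ≤ 7 * (17 - x^2)) : x = -2 ∨ x = -1 := by
  have h1 : -3 ≤ x := by nlinarith [sq_nonneg (x+2), sq_nonneg (x+3)]
  have h2 : x ≤ 0 := by nlinarith [sq_nonneg x, sq_nonneg (x+1)]
  interval_cases x <;> first | omega | norm_num at h

lemma val5 (x : ℤ) (h : (-14 - x)^2 ≤ 7 * (26 - x^2)) : x = -2 ∨ x = -1 := by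
  have h1 : -3 ≤ x := by nlinarith [sq_nonneg (x+2), sq_nonneg (x+3)]
  have h2 : x ≤ 0 := by nlinarith [sq_nonneg x, sq_nonneg (x+1)]
  interval_cases x <;> first | omega | norm_num at h

lemma val6 (x : ℤ) (h : (-17 - x)^2 ≤ 7 * (37 - x^2)) : x = -3 ∨ x = -2 := by
  have h1 : -4 ≤ x := by nlinarith [sq_nonneg (x+3), sq_nonneg (x+4)]
  have h2 : x ≤ -1 := by nlinarith [sq_nonneg (x+1), sq_nonneg (x+2)]
  interval_cases x <;> first | omega | norm_num at h

lemma val7 (x : ℤ) (h : (-20 - x)^2 ≤ 7 * (50 - x^2)) : False := by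
  have h1 : -4 ≤ x := by nlinarith [sq_nonneg (x+3), sq_nonneg (x+4)]
  have h2 : x ≤ -1 := by nlinarith [sq_nonneg (x+1), sq_nonneg (x+2)]
  interval_cases x <;> norm_num at h

/-- two-set indicator sum -/
lemma sum_two_ind (A B : Finset (Fin 8)) (x y : ℤ) :
    ∑ j : Fin 8, (x * ind (j ∈ A) + y * ind (j ∈ B)) = x * A.card + y * B.card := by
  rw [Finset.sum_add_distrib, ← Finset.mul_sum, ← Finset.mul_sum, sum_ind_mem, sum_ind_mem]

/-- extract an `S`-profile from a two-valued coordinate function. -/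
lemma profile_of_two (v : Fin 9 → ℤ) (u w t : ℤ) (ht : u + w = t)
    (hvals : ∀ j : Fin 8, v j.succ = t ∨ v j.succ = w) :
    ∀ j : Fin 8, v j.succ = u * ind (j ∈ univ.filter (fun k : Fin 8 => v k.succ = t)) + w := by
  intro j
  by_cases hj : j ∈ univ.filter (fun k : Fin 8 => v k.succ = t)
  · rw [(Finset.mem_filter.mp hj).2, ind_pos hj, ← ht]; ring
  · have hw : v j.succ = w := by
      rcases hvals j with h | h
      · exact absurd (Finset.mem_filter.mpr ⟨Finset.mem_univ j, h⟩) hj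
      · exact h
    rw [hw, ind_neg hj]; ring

lemma forward : N ⊆ T1 ∪ T2 ∪ T3 ∪ T4 ∪ T5 ∪ T6 ∪ T7 := by
  rintro v ⟨h1, h2⟩
  rw [dot_self] at h1
  rw [dot_K] at h2
  obtain ⟨a, ha⟩ : ∃ a, v 0 = a := ⟨_, rfl⟩
  rw [ha] at h1 h2
  have hq : ∑ j : Fin 8, (v j.succ)^2 = a^2 + 1 := by linarith
  have hs : ∑ j : Fin 8, v j.succ = 1 - 3*a := by linarith
  have key : ∀ j : Fin 8, ((1 - 3*a) - v j.succ)^2 ≤ 7 * ((a^2 + 1) - (v j.succ)^2) := by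
    intro j
    have hcs := sq_sum_le_card_mul_sum_sq (s := (univ : Finset (Fin 8)).erase j)
      (f := fun k => v k.succ)
    have hc : (((univ : Finset (Fin 8)).erase j).card : ℤ) = 7 := by
      rw [Finset.card_erase_of_mem (Finset.mem_univ j)]; simp
    have e1 := Finset.sum_erase_add (univ : Finset (Fin 8)) (fun k => v k.succ)
      (Finset.mem_univ j)
    have e2 := Finset.sum_erase_add (univ : Finset (Fin 8)) (fun k => (v k.succ)^2)
      (Finset.mem_univ j)
    rw [hc] at hcs
    have e1' : ∑ k ∈ univ.erase j, v k.succ = (1 - 3*a) - v j.succ := by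
      rw [hs] at e1; linarith
    have e2' : ∑ k ∈ univ.erase j, (v k.succ)^2 = (a^2 + 1) - (v j.succ)^2 := by
      rw [hq] at e2; linarith
    rw [e1', e2'] at hcs
    exact hcs
  have hcs8 := sq_sum_le_card_mul_sum_sq (s := (univ : Finset (Fin 8)))
    (f := fun k => v k.succ)
  rw [hs, hq] at hcs8
  have hcard8 : ((univ : Finset (Fin 8)).card : ℤ) = 8 := by simp
  rw [hcard8] at hcs8
  have hlo : -1 ≤ a := by nlinarith [sq_nonneg (a+1)]
  have hhi : a ≤ 7 := by nlinarith [sq_nonneg (a-7)]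
  interval_cases a
  -- a = -1 : impossible
  · exact absurd (by linarith [key 0] : (4 - v (0:Fin 8).succ)^2 ≤ 7 * (2 - (v (0:Fin 8).succ)^2))
      (valm1 _)
  -- a = 0 : T1
  · have hvals : ∀ j : Fin 8, v j.succ = 1 ∨ v j.succ = 0 := by
      intro j
      have := val0 (v j.succ) (by linarith [key j])
      omega
    have hprof := profile_of_two v 1 0 1 (by norm_num) hvals
    set S := univ.filter (fun k : Fin 8 => v k.succ = 1) with hSdef
    have hvp : v = gA 0 1 0 S := by
      rw [vec_eq_iff]
      exact ⟨by rw [ha]; simp [gA], fun j => by rw [hprof j]; simp [gA]⟩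
    have hcard : S.card = 1 := by
      rw [hvp] at hs
      rw [sum_gA] at hs
      omega
    obtain ⟨i, hi⟩ := Finset.card_eq_one.mp hcard
    have : v ∈ T1 := ⟨i, by rw [coords1, ← hi]; exact hvp⟩
    simp only [Set.mem_union]; tauto
  -- a = 1 : T2
  · have hvals : ∀ j : Fin 8, v j.succ = (-1) ∨ v j.succ = 0 := by
      intro j
      have := val1 (v j.succ) (by linarith [key j])
      omega
    have hprof := profile_of_two v (-1) (0) (-1) (by norm_num) hvals
    set S := univ.filter (fun k : Fin 8 => v k.succ = (-1)) with hSdef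
    have hvp : v = gA 1 (-1) 0 S := by
      rw [vec_eq_iff]
      exact ⟨by rw [ha]; simp [gA], fun j => by rw [hprof j]; simp [gA]⟩
    have hcard : S.card = 2 := by
      rw [hvp] at hs
      rw [sum_gA] at hs
      omega
    obtain ⟨i, k, hik, hS⟩ := Finset.card_eq_two.mp hcard
    rcases hik.lt_or_gt with hlt | hlt
    · have : v ∈ T2 := ⟨i, k, hlt, by rw [coords2 i k hik, ← hS]; exact hvp⟩
      simp only [Set.mem_union]; tauto
    · have : v ∈ T2 := ⟨k, i, hlt, by
        rw [coords2 k i hik.symm, Finset.pair_comm k i, ← hS]; exact hvp⟩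
      simp only [Set.mem_union]; tauto
  -- a = 2 : T3
  · have hvals : ∀ j : Fin 8, v j.succ = (-1) ∨ v j.succ = 0 := by
      intro j
      have := val2 (v j.succ) (by linarith [key j])
      omega
    have hprof := profile_of_two v (-1) (0) (-1) (by norm_num) hvals
    set S := univ.filter (fun k : Fin 8 => v k.succ = (-1)) with hSdef
    have hvp : v = gA 2 (-1) 0 S := by
      rw [vec_eq_iff]
      exact ⟨by rw [ha]; simp [gA], fun j => by rw [hprof j]; simp [gA]⟩
    have hcard : S.card = 5 := by
      rw [hvp] at hs
      rw [sum_gA] at hs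
      omega
    have : v ∈ T3 := ⟨S, hcard, by rw [coords3]; exact hvp⟩
    simp only [Set.mem_union]; tauto
  -- a = 3 : T4
  · have hvals : ∀ j : Fin 8, v j.succ = -2 ∨ v j.succ = -1 ∨ v j.succ = 0 := by
      intro j
      exact val3 (v j.succ) (by linarith [key j])
    set S2 := univ.filter (fun k : Fin 8 => v k.succ = -2) with hS2def
    set S1 := univ.filter (fun k : Fin 8 => v k.succ = -1) with hS1def
    have hprof : ∀ j : Fin 8, v j.succ = -2 * ind (j ∈ S2) + -1 * ind (j ∈ S1) := by
      intro j
      rcases hvals j with h | h | h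
      · rw [h, ind_pos (Finset.mem_filter.mpr ⟨Finset.mem_univ j, h⟩),
          ind_neg (fun hm => by have := (Finset.mem_filter.mp hm).2; omega)]; ring
      · rw [h, ind_neg (fun hm => by have := (Finset.mem_filter.mp hm).2; omega),
          ind_pos (Finset.mem_filter.mpr ⟨Finset.mem_univ j, h⟩)]; ring
      · rw [h, ind_neg (fun hm => by have := (Finset.mem_filter.mp hm).2; omega),
          ind_neg (fun hm => by have := (Finset.mem_filter.mp hm).2; omega)]; ring
    have hprofsq : ∀ j : Fin 8, (v j.succ)^2 = 4 * ind (j ∈ S2) + 1 * ind (j ∈ S1) := by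
      intro j
      rcases hvals j with h | h | h
      · rw [h, ind_pos (Finset.mem_filter.mpr ⟨Finset.mem_univ j, h⟩),
          ind_neg (fun hm => by have := (Finset.mem_filter.mp hm).2; omega)]; ring
      · rw [h, ind_neg (fun hm => by have := (Finset.mem_filter.mp hm).2; omega),
          ind_pos (Finset.mem_filter.mpr ⟨Finset.mem_univ j, h⟩)]; ring
      · rw [h, ind_neg (fun hm => by have := (Finset.mem_filter.mp hm).2; omega),
          ind_neg (fun hm => by have := (Finset.mem_filter.mp hm).2; omega)]; ring
    have hsum1 : -2 * (S2.card : ℤ) + -1 * S1.card = 1 - 3*3 := by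
      rw [← sum_two_ind S2 S1 (-2) (-1), ← Finset.sum_congr rfl (fun j _ => hprof j)]
      exact hs
    have hsum2 : 4 * (S2.card : ℤ) + 1 * S1.card = 3^2 + 1 := by
      rw [← sum_two_ind S2 S1 4 1, ← Finset.sum_congr rfl (fun j _ => hprofsq j)]
      exact hq
    have hc2 : S2.card = 1 := by omega
    have hc1 : S1.card = 6 := by omega
    obtain ⟨i, hi⟩ := Finset.card_eq_one.mp hc2
    have hiv : v i.succ = -2 := by
      have : i ∈ S2 := hi ▸ Finset.mem_singleton_self i
      exact (Finset.mem_filter.mp this).2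
    have hiS1 : i ∉ S1 := by
      intro hmem
      have := (Finset.mem_filter.mp hmem).2
      omega
    have hvp : v = gB i S1 := by
      rw [vec_eq_iff]
      refine ⟨by rw [ha]; simp [gB], fun j => ?_⟩
      have : ind (j ∈ S2) = ind (j = i) := by rw [hi]; simp [ind]
      rw [hprof j, this]
      simp [gB]
    have : v ∈ T4 := ⟨i, S1, hc1, hiS1, by rw [coords4]; exact hvp⟩
    simp only [Set.mem_union]; tauto
  -- a = 4 : T5
  · have hvals : ∀ j : Fin 8, v j.succ = -2 ∨ v j.succ = -1 := by
      intro j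
      have := val4 (v j.succ) (by linarith [key j])
      omega
    have hprof := profile_of_two v (-1) (-1) (-2) (by norm_num) hvals
    set S := univ.filter (fun k : Fin 8 => v k.succ = -2) with hSdef
    have hvp : v = gA 4 (-1) (-1) S := by
      rw [vec_eq_iff]
      exact ⟨by rw [ha]; simp [gA], fun j => by rw [hprof j]; simp [gA]⟩
    have hcard : S.card = 3 := by
      rw [hvp] at hs
      rw [sum_gA] at hs
      omega
    have : v ∈ T5 := ⟨S, hcard, by rw [coords5]; exact hvp⟩
    simp only [Set.mem_union]; tauto
  -- a = 5 : T6
  · have hvals : ∀ j : Fin 8, v j.succ = -2 ∨ v j.succ = -1 := by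
      intro j
      have := val5 (v j.succ) (by linarith [key j])
      omega
    have hprof := profile_of_two v (-1) (-1) (-2) (by norm_num) hvals
    set S := univ.filter (fun k : Fin 8 => v k.succ = -2) with hSdef
    have hvp : v = gA 5 (-1) (-1) S := by
      rw [vec_eq_iff]
      exact ⟨by rw [ha]; simp [gA], fun j => by rw [hprof j]; simp [gA]⟩
    have hcard : S.card = 6 := by
      rw [hvp] at hs
      rw [sum_gA] at hs
      omega
    have : v ∈ T6 := ⟨S, hcard, by rw [coords6]; exact hvp⟩
    simp only [Set.mem_union]; tauto
  -- a = 6 : T7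
  · have hvals : ∀ j : Fin 8, v j.succ = -3 ∨ v j.succ = -2 := by
      intro j
      have := val6 (v j.succ) (by linarith [key j])
      omega
    have hprof := profile_of_two v (-1) (-2) (-3) (by norm_num) hvals
    set S := univ.filter (fun k : Fin 8 => v k.succ = -3) with hSdef
    have hvp : v = gA 6 (-1) (-2) S := by
      rw [vec_eq_iff]
      exact ⟨by rw [ha]; simp [gA], fun j => by rw [hprof j]; simp [gA]⟩
    have hcard : S.card = 1 := by
      rw [hvp] at hs
      rw [sum_gA] at hs
      omega
    obtain ⟨i, hi⟩ := Finset.card_eq_one.mp hcard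
    have : v ∈ T7 := ⟨i, by rw [coords7, ← hi]; exact hvp⟩
    simp only [Set.mem_union]; tauto
  -- a = 7 : impossible
  · exact absurd (by linarith [key 0] : (-20 - v (0:Fin 8).succ)^2 ≤ 7 * (50 - (v (0:Fin 8).succ)^2))
      (val7 _)

lemma gA_inj {a u w : ℤ} (hu : u ≠ 0) {S S' : Finset (Fin 8)}
    (h : gA a u w S = gA a u w S') : S = S' := by
  ext j
  have hj := congrFun h j.succ
  simp only [gA, vp_succ] at hj
  rcases ind_cases (j ∈ S) with ⟨m, e1⟩ | ⟨m, e1⟩ <;>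
    rcases ind_cases (j ∈ S') with ⟨m', e1'⟩ | ⟨m', e1'⟩ <;> rw [e1, e1'] at hj
  · exact ⟨fun _ => m', fun _ => m⟩
  · exact absurd (by linarith) hu
  · exact absurd (by linarith) hu
  · exact ⟨fun hm => absurd hm m, fun hm => absurd hm m'⟩

lemma gB_inj {i i' : Fin 8} {S S' : Finset (Fin 8)} (hiS : i ∉ S)
    (h : gB i S = gB i' S') : i = i' ∧ S = S' := by
  have hii : i = i' := by
    have hj := congrFun h i.succ
    simp only [gB, vp_succ] at hj
    rw [show ind True = 1 from if_pos trivial, ind_neg hiS] at hj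
    rcases ind_cases (i = i') with ⟨m, e1⟩ | ⟨m, e1⟩
    · exact m
    · rw [e1] at hj
      rcases ind_cases (i ∈ S') with ⟨m', e1'⟩ | ⟨m', e1'⟩ <;> rw [e1'] at hj <;> omega
  subst hii
  refine ⟨rfl, ?_⟩
  ext j
  have hj := congrFun h j.succ
  simp only [gB, vp_succ] at hj
  rcases ind_cases (j ∈ S) with ⟨m, e1⟩ | ⟨m, e1⟩ <;>
    rcases ind_cases (j ∈ S') with ⟨m', e1'⟩ | ⟨m', e1'⟩ <;> rw [e1, e1'] at hj
  · exact ⟨fun _ => m', fun _ => m⟩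
  · omega
  · omega
  · exact ⟨fun hm => absurd hm m, fun hm => absurd hm m'⟩

-- reverse inclusions
lemma T1_sub : T1 ⊆ N := by
  rintro v ⟨i, rfl⟩
  rw [coords1]
  exact ⟨by rw [dot_gA_self]; norm_num, by rw [dot_gA_K]; norm_num⟩

lemma T2_sub : T2 ⊆ N := by
  rintro v ⟨i, j, hij, rfl⟩
  rw [coords2 i j hij.ne]
  have hc : ({i, j} : Finset (Fin 8)).card = 2 := Finset.card_pair hij.ne
  exact ⟨by rw [dot_gA_self, hc]; norm_num, by rw [dot_gA_K, hc]; norm_num⟩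

lemma T3_sub : T3 ⊆ N := by
  rintro v ⟨S, hS, rfl⟩
  rw [coords3]
  exact ⟨by rw [dot_gA_self, hS]; norm_num, by rw [dot_gA_K, hS]; norm_num⟩

lemma T4_sub : T4 ⊆ N := by
  rintro v ⟨i, S, hS, hiS, rfl⟩
  rw [coords4]
  exact ⟨by rw [dot_gB_self i S hiS, hS]; norm_num, by rw [dot_gB_K, hS]; norm_num⟩

lemma T5_sub : T5 ⊆ N := by
  rintro v ⟨S, hS, rfl⟩
  rw [coords5]
  exact ⟨by rw [dot_gA_self, hS]; norm_num, by rw [dot_gA_K, hS]; norm_num⟩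

lemma T6_sub : T6 ⊆ N := by
  rintro v ⟨S, hS, rfl⟩
  rw [coords6]
  exact ⟨by rw [dot_gA_self, hS]; norm_num, by rw [dot_gA_K, hS]; norm_num⟩

lemma T7_sub : T7 ⊆ N := by
  rintro v ⟨i, rfl⟩
  rw [coords7]
  exact ⟨by rw [dot_gA_self]; norm_num, by rw [dot_gA_K]; norm_num⟩

-- Finset versions
def F1 : Finset (Fin 9 → ℤ) := univ.image (fun i : Fin 8 => gA 0 1 0 {i})
def F2 : Finset (Fin 9 → ℤ) := (univ.powersetCard 2).image (fun S => gA 1 (-1) 0 S)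
def F3 : Finset (Fin 9 → ℤ) := (univ.powersetCard 5).image (fun S => gA 2 (-1) 0 S)
def F4 : Finset (Fin 9 → ℤ) :=
  ((univ.powersetCard 6).sigma fun S => Sᶜ).image (fun p => gB p.2 p.1)
def F5 : Finset (Fin 9 → ℤ) := (univ.powersetCard 3).image (fun S => gA 4 (-1) (-1) S)
def F6 : Finset (Fin 9 → ℤ) := (univ.powersetCard 6).image (fun S => gA 5 (-1) (-1) S)
def F7 : Finset (Fin 9 → ℤ) := univ.image (fun i : Fin 8 => gA 6 (-1) (-2) {i})

lemma T1_eq : T1 = ↑F1 := by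
  ext v
  simp only [T1, Set.mem_setOf_eq, F1, Finset.coe_image, Set.mem_image, Finset.mem_coe,
    Finset.mem_image, Finset.mem_univ, true_and, Finset.coe_univ, Set.mem_univ]
  constructor
  · rintro ⟨i, rfl⟩; exact ⟨i, (coords1 i).symm⟩
  · rintro ⟨i, rfl⟩; exact ⟨i, (coords1 i).symm⟩


lemma T2_eq : T2 = ↑F2 := by
  ext v
  simp only [T2, Set.mem_setOf_eq, F2, Finset.coe_image, Set.mem_image, Finset.mem_coe,
    Finset.mem_powersetCard_univ]
  constructor
  · rintro ⟨i, j, hij, rfl⟩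
    exact ⟨{i, j}, Finset.card_pair hij.ne, (coords2 i j hij.ne).symm⟩
  · rintro ⟨S, hS, rfl⟩
    obtain ⟨i, j, hij, rfl⟩ := Finset.card_eq_two.mp hS
    rcases hij.lt_or_gt with hlt | hlt
    · exact ⟨i, j, hlt, (coords2 i j hij).symm⟩
    · exact ⟨j, i, hlt, by rw [coords2 j i hij.symm, Finset.pair_comm j i]⟩

lemma T3_eq : T3 = ↑F3 := by
  ext v
  simp only [T3, Set.mem_setOf_eq, F3, Finset.coe_image, Set.mem_image, Finset.mem_coe,
    Finset.mem_powersetCard_univ]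
  constructor
  · rintro ⟨S, hS, rfl⟩; exact ⟨S, hS, (coords3 S).symm⟩
  · rintro ⟨S, hS, rfl⟩; exact ⟨S, hS, (coords3 S).symm⟩

lemma T4_eq : T4 = ↑F4 := by
  ext v
  simp only [T4, Set.mem_setOf_eq, F4, Finset.coe_image, Set.mem_image, Finset.mem_coe,
    Finset.mem_sigma, Finset.mem_powersetCard_univ, Finset.mem_compl]
  constructor
  · rintro ⟨i, S, hS, hiS, rfl⟩
    exact ⟨⟨S, i⟩, ⟨hS, hiS⟩, (coords4 i S).symm⟩
  · rintro ⟨⟨S, i⟩, ⟨hS, hiS⟩, rfl⟩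
    exact ⟨i, S, hS, hiS, (coords4 i S).symm⟩

lemma T5_eq : T5 = ↑F5 := by
  ext v
  simp only [T5, Set.mem_setOf_eq, F5, Finset.coe_image, Set.mem_image, Finset.mem_coe,
    Finset.mem_powersetCard_univ]
  constructor
  · rintro ⟨S, hS, rfl⟩; exact ⟨S, hS, (coords5 S).symm⟩
  · rintro ⟨S, hS, rfl⟩; exact ⟨S, hS, (coords5 S).symm⟩

lemma T6_eq : T6 = ↑F6 := by
  ext v
  simp only [T6, Set.mem_setOf_eq, F6, Finset.coe_image, Set.mem_image, Finset.mem_coe,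
    Finset.mem_powersetCard_univ]
  constructor
  · rintro ⟨S, hS, rfl⟩; exact ⟨S, hS, (coords6 S).symm⟩
  · rintro ⟨S, hS, rfl⟩; exact ⟨S, hS, (coords6 S).symm⟩

lemma T7_eq : T7 = ↑F7 := by
  ext v
  simp only [T7, Set.mem_setOf_eq, F7, Finset.coe_image, Set.mem_image, Finset.mem_coe,
    Finset.mem_univ, Finset.coe_univ, Set.mem_univ, true_and]
  constructor
  · rintro ⟨i, rfl⟩; exact ⟨i, (coords7 i).symm⟩
  · rintro ⟨i, rfl⟩; exact ⟨i, (coords7 i).symm⟩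

-- cardinalities
lemma F1_card : F1.card = 8 := by
  rw [F1, Finset.card_image_of_injective _ (fun i j h => by
    have := gA_inj (one_ne_zero) h
    exact Finset.singleton_injective this)]
  simp

lemma F2_card : F2.card = 28 := by
  rw [F2, Finset.card_image_of_injective _ (fun S S' h => gA_inj (by norm_num) h),
    Finset.card_powersetCard]
  simp [Nat.choose]

lemma F3_card : F3.card = 56 := by
  rw [F3, Finset.card_image_of_injective _ (fun S S' h => gA_inj (by norm_num) h),
    Finset.card_powersetCard]
  simp [Nat.choose]

lemma F5_card : F5.card = 56 := by
  rw [F5, Finset.card_image_of_injective _ (fun S S' h => gA_inj (by norm_num) h),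
    Finset.card_powersetCard]
  simp [Nat.choose]

lemma F6_card : F6.card = 28 := by
  rw [F6, Finset.card_image_of_injective _ (fun S S' h => gA_inj (by norm_num) h),
    Finset.card_powersetCard]
  simp [Nat.choose]

lemma F7_card : F7.card = 8 := by
  rw [F7, Finset.card_image_of_injective _ (fun i j h => by
    have := gA_inj (by norm_num : (-1 : ℤ) ≠ 0) h
    exact Finset.singleton_injective this)]
  simp

lemma F4_card : F4.card = 56 := by
  rw [F4, Finset.card_image_of_injOn (fun p hp q hq h => by
    rw [Finset.mem_coe, Finset.mem_sigma] at hp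
    have hiS : p.2 ∉ p.1 := Finset.mem_compl.mp hp.2
    obtain ⟨h1, h2⟩ := gB_inj hiS h
    exact Sigma.ext h2 (by rw [h1]))]
  rw [Finset.card_sigma]
  rw [Finset.sum_congr rfl (fun S hS => by
    rw [Finset.card_compl, Finset.mem_powersetCard_univ.mp hS])]
  rw [Finset.sum_const, Finset.card_powersetCard]
  simp [Nat.choose]

lemma F1_zero {v : Fin 9 → ℤ} (h : v ∈ F1) : v 0 = 0 := by
  obtain ⟨i, _, rfl⟩ := Finset.mem_image.mp h; rfl
lemma F2_zero {v : Fin 9 → ℤ} (h : v ∈ F2) : v 0 = 1 := by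
  obtain ⟨S, _, rfl⟩ := Finset.mem_image.mp h; rfl
lemma F3_zero {v : Fin 9 → ℤ} (h : v ∈ F3) : v 0 = 2 := by
  obtain ⟨S, _, rfl⟩ := Finset.mem_image.mp h; rfl
lemma F4_zero {v : Fin 9 → ℤ} (h : v ∈ F4) : v 0 = 3 := by
  obtain ⟨p, _, rfl⟩ := Finset.mem_image.mp h; rfl
lemma F5_zero {v : Fin 9 → ℤ} (h : v ∈ F5) : v 0 = 4 := by
  obtain ⟨S, _, rfl⟩ := Finset.mem_image.mp h; rfl
lemma F6_zero {v : Fin 9 → ℤ} (h : v ∈ F6) : v 0 = 5 := by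
  obtain ⟨S, _, rfl⟩ := Finset.mem_image.mp h; rfl
lemma F7_zero {v : Fin 9 → ℤ} (h : v ∈ F7) : v 0 = 6 := by
  obtain ⟨i, _, rfl⟩ := Finset.mem_image.mp h; rfl

lemma Fall_card : (F1 ∪ F2 ∪ F3 ∪ F4 ∪ F5 ∪ F6 ∪ F7).card = 240 := by
  have z12 : ∀ v ∈ F1 ∪ F2, v 0 = 0 ∨ v 0 = 1 := by
    intro v hv
    rcases Finset.mem_union.mp hv with h | h
    · exact Or.inl (F1_zero h)
    · exact Or.inr (F2_zero h)
  have z13 : ∀ v ∈ F1 ∪ F2 ∪ F3, v 0 = 0 ∨ v 0 = 1 ∨ v 0 = 2 := by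
    intro v hv
    rcases Finset.mem_union.mp hv with h | h
    · rcases z12 v h with h' | h'
      · exact Or.inl h'
      · exact Or.inr (Or.inl h')
    · exact Or.inr (Or.inr (F3_zero h))
  have z14 : ∀ v ∈ F1 ∪ F2 ∪ F3 ∪ F4, v 0 = 0 ∨ v 0 = 1 ∨ v 0 = 2 ∨ v 0 = 3 := by
    intro v hv
    rcases Finset.mem_union.mp hv with h | h
    · rcases z13 v h with h' | h' | h'
      exacts [Or.inl h', Or.inr (Or.inl h'), Or.inr (Or.inr (Or.inl h'))]
    · exact Or.inr (Or.inr (Or.inr (F4_zero h)))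
  have z15 : ∀ v ∈ F1 ∪ F2 ∪ F3 ∪ F4 ∪ F5,
      v 0 = 0 ∨ v 0 = 1 ∨ v 0 = 2 ∨ v 0 = 3 ∨ v 0 = 4 := by
    intro v hv
    rcases Finset.mem_union.mp hv with h | h
    · rcases z14 v h with h' | h' | h' | h'
      exacts [Or.inl h', Or.inr (Or.inl h'), Or.inr (Or.inr (Or.inl h')),
        Or.inr (Or.inr (Or.inr (Or.inl h')))]
    · exact Or.inr (Or.inr (Or.inr (Or.inr (F5_zero h))))
  have z16 : ∀ v ∈ F1 ∪ F2 ∪ F3 ∪ F4 ∪ F5 ∪ F6,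
      v 0 = 0 ∨ v 0 = 1 ∨ v 0 = 2 ∨ v 0 = 3 ∨ v 0 = 4 ∨ v 0 = 5 := by
    intro v hv
    rcases Finset.mem_union.mp hv with h | h
    · rcases z15 v h with h' | h' | h' | h' | h'
      exacts [Or.inl h', Or.inr (Or.inl h'), Or.inr (Or.inr (Or.inl h')),
        Or.inr (Or.inr (Or.inr (Or.inl h'))),
        Or.inr (Or.inr (Or.inr (Or.inr (Or.inl h'))))]
    · exact Or.inr (Or.inr (Or.inr (Or.inr (Or.inr (F6_zero h)))))
  have d2 : Disjoint (F1 ∪ F2 ∪ F3 ∪ F4 ∪ F5 ∪ F6) F7 :=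
    Finset.disjoint_left.mpr fun v h1 h2 => by
      have := z16 v h1; have := F7_zero h2; omega
  have d3 : Disjoint (F1 ∪ F2 ∪ F3 ∪ F4 ∪ F5) F6 :=
    Finset.disjoint_left.mpr fun v h1 h2 => by
      have := z15 v h1; have := F6_zero h2; omega
  have d4 : Disjoint (F1 ∪ F2 ∪ F3 ∪ F4) F5 :=
    Finset.disjoint_left.mpr fun v h1 h2 => by
      have := z14 v h1; have := F5_zero h2; omega
  have d5 : Disjoint (F1 ∪ F2 ∪ F3) F4 :=
    Finset.disjoint_left.mpr fun v h1 h2 => by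
      have := z13 v h1; have := F4_zero h2; omega
  have d6 : Disjoint (F1 ∪ F2) F3 :=
    Finset.disjoint_left.mpr fun v h1 h2 => by
      have := z12 v h1; have := F3_zero h2; omega
  have d7 : Disjoint F1 F2 :=
    Finset.disjoint_left.mpr fun v h1 h2 => by
      have := F1_zero h1; have := F2_zero h2; omega
  rw [Finset.card_union_of_disjoint d2, Finset.card_union_of_disjoint d3,
    Finset.card_union_of_disjoint d4, Finset.card_union_of_disjoint d5,
    Finset.card_union_of_disjoint d6, Finset.card_union_of_disjoint d7,
    F1_card, F2_card, F3_card, F4_card, F5_card, F6_card, F7_card]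


/-- The (−1)-classes of the dP₈ lattice are exactly the vectors of the seven listed
types, with counts `8, 28, 56, 56, 56, 28, 8`, in total `240` classes. -/
theorem statement3 :
    N = T1 ∪ T2 ∪ T3 ∪ T4 ∪ T5 ∪ T6 ∪ T7 ∧
    T1.ncard = 8 ∧ T2.ncard = 28 ∧ T3.ncard = 56 ∧ T4.ncard = 56 ∧
    T5.ncard = 56 ∧ T6.ncard = 28 ∧ T7.ncard = 8 ∧
    N.ncard = 240 := by

  have hN : N = T1 ∪ T2 ∪ T3 ∪ T4 ∪ T5 ∪ T6 ∪ T7 :=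
    Set.Subset.antisymm forward
      (Set.union_subset (Set.union_subset (Set.union_subset (Set.union_subset
        (Set.union_subset (Set.union_subset T1_sub T2_sub) T3_sub) T4_sub) T5_sub)
        T6_sub) T7_sub)
  refine ⟨hN, ?_, ?_, ?_, ?_, ?_, ?_, ?_, ?_⟩
  · rw [T1_eq, Set.ncard_coe_finset, F1_card]
  · rw [T2_eq, Set.ncard_coe_finset, F2_card]
  · rw [T3_eq, Set.ncard_coe_finset, F3_card]
  · rw [T4_eq, Set.ncard_coe_finset, F4_card]
  · rw [T5_eq, Set.ncard_coe_finset, F5_card]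
  · rw [T6_eq, Set.ncard_coe_finset, F6_card]
  · rw [T7_eq, Set.ncard_coe_finset, F7_card]
  · rw [hN, T1_eq, T2_eq, T3_eq, T4_eq, T5_eq, T6_eq, T7_eq,
      ← Finset.coe_union, ← Finset.coe_union, ← Finset.coe_union, ← Finset.coe_union,
      ← Finset.coe_union, ← Finset.coe_union, Set.ncard_coe_finset, Fall_card]

end Stmt3
end

section
/- The de Jonquières involution of the dP_5 lattice, i.e. the ℤ-linear map I : ℤ^6 → ℤ^6 with I(l) = 3l − 2e_1 − e_2 − e_3 − e_4 − e_5, I(e_1) = 2l − e_1 − e_2 − e_3 − e_4 − e_5, and I(e_j) = l − e_1 − e_j for j = 2,…,5, satisfies: I ∘ I = id; I preserves the intersection form; I(K) = K; the sublattice of I-fixed vectors is exactly the rank-2 sublattice ℤK + ℤ(l − e_1) (and the eigenspace dimensions are (b_2^+, b_2^−) = (2, 4)); and for every (−1)-class v one has I(v) ≠ v and I(v)·v = 1. -/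
namespace Stmt6

/-- Intersection form of the dP₅ lattice `ℤ⁶` with basis `l, e₁, …, e₅`. -/
def dot (x y : Fin 6 → ℤ) : ℤ := x 0 * y 0 - ∑ i : Fin 5, x i.succ * y i.succ

/-- The canonical class `K = -3l + e₁ + ⋯ + e₅`. -/
def K : Fin 6 → ℤ := fun i => if i = 0 then -3 else 1

/-- The hyperplane class `l`. -/
def l : Fin 6 → ℤ := Pi.single 0 1

/-- The exceptional class `e_{j+1}` (`j : Fin 5` zero-based); in particular `e 0 = e₁`. -/
def e (j : Fin 5) : Fin 6 → ℤ := Pi.single j.succ 1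

lemma s0 : (0 : Fin 5).succ = 1 := rfl
lemma s1 : (1 : Fin 5).succ = 2 := rfl
lemma s2 : (2 : Fin 5).succ = 3 := rfl
lemma s3 : (3 : Fin 5).succ = 4 := rfl
lemma s4 : (4 : Fin 5).succ = 5 := rfl

lemma cons_five {α : Type*} (a b c d e f : α) : ![a,b,c,d,e,f] 5 = f := rfl

/-- The explicit coordinate formula for the de Jonquières involution. -/
def Ifun (x : Fin 6 → ℤ) : Fin 6 → ℤ :=
  ![3*x 0 + 2*x 1 + x 2 + x 3 + x 4 + x 5,
    -2*x 0 - x 1 - x 2 - x 3 - x 4 - x 5,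
    -x 0 - x 1 - x 2,
    -x 0 - x 1 - x 3,
    -x 0 - x 1 - x 4,
    -x 0 - x 1 - x 5]

theorem apply_eq (I : (Fin 6 → ℤ) →ₗ[ℤ] (Fin 6 → ℤ))
    (hl : I l = (3 : ℤ) • l - (2 : ℤ) • e 0 - e 1 - e 2 - e 3 - e 4)
    (he1 : I (e 0) = (2 : ℤ) • l - e 0 - e 1 - e 2 - e 3 - e 4)
    (hej : ∀ j : Fin 5, j ≠ 0 → I (e j) = l - e 0 - e j) (x : Fin 6 → ℤ) :
    I x = Ifun x := by
  have hx : x = x 0 • l + x 1 • e 0 + x 2 • e 1 + x 3 • e 2 + x 4 • e 3 + x 5 • e 4 := by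
    funext i
    fin_cases i <;> simp [l, e, Pi.single_apply, s0, s1, s2, s3, s4]
  calc I x = I (x 0 • l + x 1 • e 0 + x 2 • e 1 + x 3 • e 2 + x 4 • e 3 + x 5 • e 4) := by
        rw [← hx]
  _ = Ifun x := by
    simp only [map_add, map_smul, hl, he1, hej 1 (by decide), hej 2 (by decide),
      hej 3 (by decide), hej 4 (by decide)]
    funext i
    fin_cases i <;> simp [Ifun, l, e, Pi.single_apply, s0, s1, s2, s3, s4, cons_five] <;> ring

set_option maxHeartbeats 1600000 in
/-- The de Jonquières involution of the dP₅ lattice: the ℤ-linear map `I` with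
`I(l) = 3l − 2e₁ − e₂ − e₃ − e₄ − e₅`, `I(e₁) = 2l − e₁ − e₂ − e₃ − e₄ − e₅`, and
`I(e_j) = l − e₁ − e_j` for `j = 2,…,5` satisfies: `I∘I = id`; `I` preserves the
intersection form; `I(K) = K`; the sublattice of fixed vectors is exactly the rank-2
sublattice `ℤK + ℤ(l − e₁)` (and the eigenspace dimensions are `(b₂⁺, b₂⁻) = (2, 4)`);
and for every (−1)-class `v` one has `I(v) ≠ v` and `I(v)·v = 1`. -/
theorem statement6 (I : (Fin 6 → ℤ) →ₗ[ℤ] (Fin 6 → ℤ))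
    (hl : I l = (3 : ℤ) • l - (2 : ℤ) • e 0 - e 1 - e 2 - e 3 - e 4)
    (he1 : I (e 0) = (2 : ℤ) • l - e 0 - e 1 - e 2 - e 3 - e 4)
    (hej : ∀ j : Fin 5, j ≠ 0 → I (e j) = l - e 0 - e j) :
    (∀ x, I (I x) = x) ∧
    (∀ x y, dot (I x) (I y) = dot x y) ∧
    I K = K ∧
    (∀ x, I x = x ↔ ∃ a b : ℤ, x = a • K + b • (l - e 0)) ∧
    Module.finrank ℤ ↥(LinearMap.ker (I - LinearMap.id)) = 2 ∧
    Module.finrank ℤ ↥(LinearMap.ker (I + LinearMap.id)) = 4 ∧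
    (∀ v, dot v v = -1 ∧ dot v K = -1 → I v ≠ v ∧ dot (I v) v = 1) := by
  have hI : ∀ x, I x = Ifun x := apply_eq I hl he1 hej
  -- (1) involution
  have part1 : ∀ x, I (I x) = x := by
    intro x
    rw [hI, hI]
    funext i
    fin_cases i <;> simp [Ifun, cons_five] <;> ring
  -- (2) preserves the form
  have part2 : ∀ x y, dot (I x) (I y) = dot x y := by
    intro x y
    rw [hI, hI]
    simp only [dot, Fin.sum_univ_five, s0, s1, s2, s3, s4]
    simp [Ifun, cons_five]
    ring
  -- (3) fixes K
  have part3 : I K = K := by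
    rw [hI]
    funext i
    fin_cases i <;> simp [Ifun, K, cons_five]
  -- (4) fixed sublattice
  have part4 : ∀ x, I x = x ↔ ∃ a b : ℤ, x = a • K + b • (l - e 0) := by
    intro x
    constructor
    · intro h
      rw [hI] at h
      have h0 := congrFun h 0
      have h1 := congrFun h 1
      have h2 := congrFun h 2
      have h3 := congrFun h 3
      have h4 := congrFun h 4
      have h5 := congrFun h 5
      simp only [Ifun, Matrix.cons_val_zero, Matrix.cons_val_one, Matrix.head_cons,
        Matrix.cons_val_two, Matrix.tail_cons, Matrix.cons_val_three, Matrix.cons_val_four,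
        cons_five] at h0 h1 h2 h3 h4 h5
      refine ⟨x 2, x 0 + 3 * x 2, ?_⟩
      funext i
      fin_cases i <;>
        simp [K, l, e, Pi.single_apply, s0, smul_eq_mul] <;> omega
    · rintro ⟨a, b, rfl⟩
      rw [hI]
      funext i
      fin_cases i <;>
        simp [Ifun, K, l, e, Pi.single_apply, s0, cons_five, smul_eq_mul] <;> ring
  refine ⟨part1, part2, part3, part4, ?_, ?_, ?_⟩
  -- (5) finrank of the fixed sublattice
  · have hmem : ∀ x : Fin 6 → ℤ, x ∈ LinearMap.ker (I - LinearMap.id) ↔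
        (x 1 = -x 0 - 2 * x 2 ∧ x 3 = x 2 ∧ x 4 = x 2 ∧ x 5 = x 2) := by
      intro x
      rw [LinearMap.mem_ker, LinearMap.sub_apply, LinearMap.id_apply, sub_eq_zero, hI]
      constructor
      · intro h
        have h0 := congrFun h 0
        have h2 := congrFun h 2
        have h3 := congrFun h 3
        have h4 := congrFun h 4
        have h5 := congrFun h 5
        simp only [Ifun, Matrix.cons_val_zero, Matrix.cons_val_one, Matrix.head_cons,
          Matrix.cons_val_two, Matrix.tail_cons, Matrix.cons_val_three, Matrix.cons_val_four,
          cons_five] at h0 h2 h3 h4 h5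
        refine ⟨by omega, by omega, by omega, by omega⟩
      · intro h
        funext i
        fin_cases i <;> simp [Ifun, cons_five] <;> omega
    let f : ↥(LinearMap.ker (I - LinearMap.id)) →ₗ[ℤ] (Fin 2 → ℤ) :=
      { toFun := fun x => ![x.1 0, x.1 2]
        map_add' := by
          intro x y
          funext i
          fin_cases i <;> simp
        map_smul' := by
          intro c x
          funext i
          fin_cases i <;> simp }
    let g : (Fin 2 → ℤ) →ₗ[ℤ] ↥(LinearMap.ker (I - LinearMap.id)) :=
      { toFun := fun c => ⟨![c 0, -c 0 - 2*c 1, c 1, c 1, c 1, c 1], by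
          rw [hmem]; simp [cons_five]⟩
        map_add' := by
          intro c d
          apply Subtype.ext
          funext i
          fin_cases i <;> simp [cons_five] <;> ring
        map_smul' := by
          intro r c
          apply Subtype.ext
          funext i
          fin_cases i <;> simp [cons_five] <;> ring }
    have E : ↥(LinearMap.ker (I - LinearMap.id)) ≃ₗ[ℤ] (Fin 2 → ℤ) := by
      refine LinearEquiv.ofLinear f g ?_ ?_
      · apply LinearMap.ext
        intro c
        funext i
        fin_cases i <;> simp [f, g, cons_five]
      · apply LinearMap.ext
        intro x
        obtain ⟨hx1, hx3, hx4, hx5⟩ := (hmem x.1).mp x.2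
        apply Subtype.ext
        funext i
        fin_cases i <;> simp [f, g, cons_five] <;> omega
    rw [E.finrank_eq, Module.finrank_fin_fun]
  -- (6) finrank of the anti-fixed sublattice
  · have hmem : ∀ x : Fin 6 → ℤ, x ∈ LinearMap.ker (I + LinearMap.id) ↔
        (x 1 = -x 0 ∧ x 5 = -2*x 0 - x 2 - x 3 - x 4) := by
      intro x
      rw [LinearMap.mem_ker, LinearMap.add_apply, LinearMap.id_apply, add_eq_zero_iff_eq_neg, hI]
      constructor
      · intro h
        have h0 := congrFun h 0
        have h1 := congrFun h 1
        have h2 := congrFun h 2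
        simp only [Ifun, Matrix.cons_val_zero, Matrix.cons_val_one, Matrix.head_cons,
          Matrix.cons_val_two, Matrix.tail_cons, Pi.neg_apply] at h0 h1 h2
        refine ⟨by omega, by omega⟩
      · intro h
        funext i
        fin_cases i <;> simp [Ifun, cons_five] <;> omega
    let f : ↥(LinearMap.ker (I + LinearMap.id)) →ₗ[ℤ] (Fin 4 → ℤ) :=
      { toFun := fun x => ![x.1 0, x.1 2, x.1 3, x.1 4]
        map_add' := by
          intro x y
          funext i
          fin_cases i <;> simp
        map_smul' := by
          intro c x
          funext i
          fin_cases i <;> simp }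
    let g : (Fin 4 → ℤ) →ₗ[ℤ] ↥(LinearMap.ker (I + LinearMap.id)) :=
      { toFun := fun c => ⟨![c 0, -c 0, c 1, c 2, c 3, -2*c 0 - c 1 - c 2 - c 3], by
          rw [hmem]; simp [cons_five]⟩
        map_add' := by
          intro c d
          apply Subtype.ext
          funext i
          fin_cases i <;> simp [cons_five] <;> ring
        map_smul' := by
          intro r c
          apply Subtype.ext
          funext i
          fin_cases i <;> simp [cons_five] <;> ring }
    have E : ↥(LinearMap.ker (I + LinearMap.id)) ≃ₗ[ℤ] (Fin 4 → ℤ) := by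
      refine LinearEquiv.ofLinear f g ?_ ?_
      · apply LinearMap.ext
        intro c
        funext i
        fin_cases i <;> simp [f, g, cons_five]
      · apply LinearMap.ext
        intro x
        obtain ⟨hx1, hx5⟩ := (hmem x.1).mp x.2
        apply Subtype.ext
        funext i
        fin_cases i <;> simp [f, g, cons_five] <;> omega
    rw [E.finrank_eq, Module.finrank_fin_fun]
  -- (7) (-1)-classes
  · rintro v ⟨hvv, hvK⟩
    have h1 : v 0 * v 0 - v 1 * v 1 - v 2 * v 2 - v 3 * v 3 - v 4 * v 4 - v 5 * v 5 = -1 := by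
      simp only [dot, Fin.sum_univ_five, s0, s1, s2, s3, s4] at hvv
      linarith
    have h2 : -3 * v 0 - v 1 - v 2 - v 3 - v 4 - v 5 = -1 := by
      simp [dot, Fin.sum_univ_five, s0, s1, s2, s3, s4, K] at hvK
      linarith
    have hS : v 2 + v 3 + v 4 + v 5 = 1 - 3 * v 0 - v 1 := by linarith
    have hQ : v 2 * v 2 + v 3 * v 3 + v 4 * v 4 + v 5 * v 5 = v 0 * v 0 - v 1 * v 1 + 1 := by
      linarith
    have hG : 0 ≤ 4 * (v 0 * v 0 - v 1 * v 1 + 1) - (1 - 3 * v 0 - v 1) ^ 2 := by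
      rw [← hS, ← hQ]
      nlinarith [sq_nonneg (v 2 - v 3), sq_nonneg (v 2 - v 4), sq_nonneg (v 2 - v 5),
        sq_nonneg (v 3 - v 4), sq_nonneg (v 3 - v 5), sq_nonneg (v 4 - v 5)]
    have key : (v 0 + v 1) * (v 0 + v 1 - 1) = 0 := by
      have hlow : 0 ≤ (v 0 + v 1) * (v 0 + v 1 - 1) := by
        rcases le_or_gt (v 0 + v 1) 0 with h | h
        · nlinarith
        · nlinarith
      have hup : (v 0 + v 1) * (v 0 + v 1 - 1) ≤ 1 := by
        nlinarith [hG, sq_nonneg (v 0 - v 1 - 1)]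
      have heven : Even ((v 0 + v 1) * (v 0 + v 1 - 1)) := Int.even_mul_pred_self _
      obtain ⟨k, hk⟩ := heven
      omega
    have hdot : dot (I v) v = 1 := by
      rw [hI]
      simp only [dot, Fin.sum_univ_five, s0, s1, s2, s3, s4]
      simp only [Ifun, Matrix.cons_val_zero, Matrix.cons_val_one, Matrix.head_cons,
        Matrix.cons_val_two, Matrix.tail_cons, Matrix.cons_val_three, Matrix.cons_val_four,
        cons_five]
      linear_combination hQ + 2 * (v 0 + v 1) * hS - 2 * key
    refine ⟨?_, hdot⟩
    intro h
    rw [h, hvv] at hdot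
    omega

end Stmt6
end

section
/- The two ℤ-linear maps on the dP_3 lattice ℤ^4 given by I^{(2)}: l ↦ 2l − e_1 − e_2 − e_3, e_1 ↦ l − e_1 − e_3, e_2 ↦ l − e_2 − e_3, e_3 ↦ l − e_1 − e_2, and I^{(3)}: l ↦ 2l − e_1 − e_2 − e_3, e_1 ↦ l − e_2 − e_3, e_2 ↦ l − e_1 − e_3, e_3 ↦ l − e_1 − e_2, are both involutions (square to the identity), both preserve the intersection form, both fix the canonical class K, and their ±1 eigenspace dimensions are (b_2^+, b_2^−) = (2, 2) for I^{(2)} and (b_2^+, b_2^−) = (3, 1) for I^{(3)}. -/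
namespace Stmt7

/-- Intersection form of the dP₃ lattice `ℤ⁴` with basis `l, e₁, e₂, e₃`. -/
def dot (x y : Fin 4 → ℤ) : ℤ := x 0 * y 0 - ∑ i : Fin 3, x i.succ * y i.succ

/-- The canonical class `K = -3l + e₁ + e₂ + e₃`. -/
def K : Fin 4 → ℤ := fun i => if i = 0 then -3 else 1

/-- The hyperplane class `l`. -/
def l : Fin 4 → ℤ := Pi.single 0 1

/-- The exceptional class `e_{j+1}` (`j : Fin 3` zero-based); in particular `e 0 = e₁`. -/
def e (j : Fin 3) : Fin 4 → ℤ := Pi.single j.succ 1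

lemma hl : l = ![1,0,0,0] := by funext i; fin_cases i <;> rfl
lemma he0 : e 0 = ![0,1,0,0] := by funext i; fin_cases i <;> rfl
lemma he1 : e 1 = ![0,0,1,0] := by funext i; fin_cases i <;> rfl
lemma he2 : e 2 = ![0,0,0,1] := by funext i; fin_cases i <;> rfl
lemma hK : K = ![-3,1,1,1] := by funext i; fin_cases i <;> rfl

lemma expand (x : Fin 4 → ℤ) : x = x 0 • l + x 1 • e 0 + x 2 • e 1 + x 3 • e 2 := by
  funext i; fin_cases i <;> simp [hl, he0, he1, he2]

lemma dot_eq (x y : Fin 4 → ℤ) :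
    dot x y = x 0 * y 0 - x 1 * y 1 - x 2 * y 2 - x 3 * y 3 := by
  simp [dot, Fin.sum_univ_three, show (Fin.succ 0 : Fin 4) = 1 from rfl,
    show (Fin.succ 1 : Fin 4) = 2 from rfl, show (Fin.succ 2 : Fin 4) = 3 from rfl]
  ring

lemma rank_of_eq_range {n : ℕ} (S : Submodule ℤ (Fin 4 → ℤ))
    (f : (Fin n → ℤ) →ₗ[ℤ] (Fin 4 → ℤ)) (hinj : Function.Injective f)
    (h : S = LinearMap.range f) : Module.finrank ℤ ↥S = n := by
  rw [h, ← (LinearEquiv.ofInjective f hinj).finrank_eq]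
  simp [Module.finrank_pi]

set_option maxHeartbeats 4000000 in
/-- The two ℤ-linear maps `I⁽²⁾` and `I⁽³⁾` on the dP₃ lattice, given on the basis by
`I⁽²⁾: l ↦ 2l − e₁ − e₂ − e₃, e₁ ↦ l − e₁ − e₃, e₂ ↦ l − e₂ − e₃, e₃ ↦ l − e₁ − e₂` and
`I⁽³⁾: l ↦ 2l − e₁ − e₂ − e₃, e₁ ↦ l − e₂ − e₃, e₂ ↦ l − e₁ − e₃, e₃ ↦ l − e₁ − e₂`,
are both involutions, both preserve the intersection form, both fix the canonical
class `K`, and their ±1 eigenspace dimensions are `(b₂⁺, b₂⁻) = (2, 2)` for `I⁽²⁾`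
and `(3, 1)` for `I⁽³⁾`. -/
theorem statement7 (I2 I3 : (Fin 4 → ℤ) →ₗ[ℤ] (Fin 4 → ℤ))
    (h2l : I2 l = (2 : ℤ) • l - e 0 - e 1 - e 2)
    (h2e1 : I2 (e 0) = l - e 0 - e 2)
    (h2e2 : I2 (e 1) = l - e 1 - e 2)
    (h2e3 : I2 (e 2) = l - e 0 - e 1)
    (h3l : I3 l = (2 : ℤ) • l - e 0 - e 1 - e 2)
    (h3e1 : I3 (e 0) = l - e 1 - e 2)
    (h3e2 : I3 (e 1) = l - e 0 - e 2)
    (h3e3 : I3 (e 2) = l - e 0 - e 1) :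
    (∀ x, I2 (I2 x) = x) ∧ (∀ x, I3 (I3 x) = x) ∧
    (∀ x y, dot (I2 x) (I2 y) = dot x y) ∧ (∀ x y, dot (I3 x) (I3 y) = dot x y) ∧
    I2 K = K ∧ I3 K = K ∧
    Module.finrank ℤ ↥(LinearMap.ker (I2 - LinearMap.id)) = 2 ∧
    Module.finrank ℤ ↥(LinearMap.ker (I2 + LinearMap.id)) = 2 ∧
    Module.finrank ℤ ↥(LinearMap.ker (I3 - LinearMap.id)) = 3 ∧
    Module.finrank ℤ ↥(LinearMap.ker (I3 + LinearMap.id)) = 1 := by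
  have hI2 : ∀ x : Fin 4 → ℤ, I2 x = ![2*x 0 + x 1 + x 2 + x 3,
      -x 0 - x 1 - x 3, -x 0 - x 2 - x 3, -x 0 - x 1 - x 2] := by
    intro x
    conv_lhs => rw [expand x]
    rw [map_add, map_add, map_add, map_smul, map_smul, map_smul, map_smul,
      h2l, h2e1, h2e2, h2e3]
    funext i; fin_cases i <;> simp [hl, he0, he1, he2] <;> ring
  have hI3 : ∀ x : Fin 4 → ℤ, I3 x = ![2*x 0 + x 1 + x 2 + x 3,
      -x 0 - x 2 - x 3, -x 0 - x 1 - x 3, -x 0 - x 1 - x 2] := by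
    intro x
    conv_lhs => rw [expand x]
    rw [map_add, map_add, map_add, map_smul, map_smul, map_smul, map_smul,
      h3l, h3e1, h3e2, h3e3]
    funext i; fin_cases i <;> simp [hl, he0, he1, he2] <;> ring
  refine ⟨?_, ?_, ?_, ?_, ?_, ?_, ?_, ?_, ?_, ?_⟩
  · intro x
    rw [hI2, hI2]
    funext i; fin_cases i <;> simp <;> ring
  · intro x
    rw [hI3, hI3]
    funext i; fin_cases i <;> simp <;> ring
  · intro x y
    rw [dot_eq, dot_eq, hI2 x, hI2 y]
    simp; ring
  · intro x y
    rw [dot_eq, dot_eq, hI3 x, hI3 y]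
    simp; ring
  · rw [hI2 K, hK]
    funext i; fin_cases i <;> simp
  · rw [hI3 K, hK]
    funext i; fin_cases i <;> simp
  · -- ker (I2 - id)
    have hf : ∀ c : Fin 2 → ℤ, (Matrix.of ![![(1:ℤ),0],![0,1],![0,1],![-1,-2]]).mulVecLin c = ![c 0, c 1, c 1, -c 0 - 2*c 1] := by
      intro c
      funext i
      fin_cases i <;>
        simp [Matrix.mulVecLin_apply, Matrix.mulVec, dotProduct, Fin.sum_univ_two] <;> ring
    refine rank_of_eq_range _ ((Matrix.of ![![(1:ℤ),0],![0,1],![0,1],![-1,-2]]).mulVecLin) ?_ ?_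
    · intro c d h
      rw [hf, hf] at h
      have h0 := congrFun h 0
      have h1 := congrFun h 1
      simp at h0 h1
      funext i; fin_cases i <;> first | exact h0 | exact h1
    · ext x
      simp only [LinearMap.mem_ker, LinearMap.mem_range]
      constructor
      · intro hx
        rw [LinearMap.sub_apply, LinearMap.id_apply, hI2 x] at hx
        have h0 := congrFun hx 0
        have h1 := congrFun hx 1
        have h2 := congrFun hx 2
        have h3 := congrFun hx 3
        simp at h0 h1 h2 h3
        refine ⟨![x 0, x 1], ?_⟩
        rw [hf]
        funext i
        fin_cases i <;> simp <;> omega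
      · rintro ⟨c, rfl⟩
        rw [LinearMap.sub_apply, LinearMap.id_apply, hf, hI2]
        funext i
        fin_cases i <;> simp <;> ring
  · -- ker (I2 + id)
    have hf : ∀ c : Fin 2 → ℤ, (Matrix.of ![![(1:ℤ),0],![0,1],![-2,-1],![-1,0]]).mulVecLin c = ![c 0, c 1, -2*c 0 - c 1, -c 0] := by
      intro c
      funext i
      fin_cases i <;>
        simp [Matrix.mulVecLin_apply, Matrix.mulVec, dotProduct, Fin.sum_univ_two] <;> ring
    refine rank_of_eq_range _ ((Matrix.of ![![(1:ℤ),0],![0,1],![-2,-1],![-1,0]]).mulVecLin) ?_ ?_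
    · intro c d h
      rw [hf, hf] at h
      have h0 := congrFun h 0
      have h1 := congrFun h 1
      simp at h0 h1
      funext i; fin_cases i <;> first | exact h0 | exact h1
    · ext x
      simp only [LinearMap.mem_ker, LinearMap.mem_range]
      constructor
      · intro hx
        rw [LinearMap.add_apply, LinearMap.id_apply, hI2 x] at hx
        have h0 := congrFun hx 0
        have h1 := congrFun hx 1
        have h2 := congrFun hx 2
        have h3 := congrFun hx 3
        simp at h0 h1 h2 h3
        refine ⟨![x 0, x 1], ?_⟩
        rw [hf]
        funext i
        fin_cases i <;> simp <;> omega
      · rintro ⟨c, rfl⟩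
        rw [LinearMap.add_apply, LinearMap.id_apply, hf, hI2]
        funext i
        fin_cases i <;> simp <;> ring
  · -- ker (I3 - id)
    have hf : ∀ c : Fin 3 → ℤ, (Matrix.of ![![(1:ℤ),0,0],![0,1,0],![0,0,1],![-1,-1,-1]]).mulVecLin c = ![c 0, c 1, c 2, -c 0 - c 1 - c 2] := by
      intro c
      funext i
      fin_cases i <;>
        simp [Matrix.mulVecLin_apply, Matrix.mulVec, dotProduct, Fin.sum_univ_three] <;> ring
    refine rank_of_eq_range _ ((Matrix.of ![![(1:ℤ),0,0],![0,1,0],![0,0,1],![-1,-1,-1]]).mulVecLin) ?_ ?_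
    · intro c d h
      rw [hf, hf] at h
      have h0 := congrFun h 0
      have h1 := congrFun h 1
      have h2 := congrFun h 2
      simp at h0 h1 h2
      funext i; fin_cases i <;> first | exact h0 | exact h1 | exact h2
    · ext x
      simp only [LinearMap.mem_ker, LinearMap.mem_range]
      constructor
      · intro hx
        rw [LinearMap.sub_apply, LinearMap.id_apply, hI3 x] at hx
        have h0 := congrFun hx 0
        have h1 := congrFun hx 1
        have h2 := congrFun hx 2
        have h3 := congrFun hx 3
        simp at h0 h1 h2 h3
        refine ⟨![x 0, x 1, x 2], ?_⟩
        rw [hf]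
        funext i
        fin_cases i <;> simp <;> omega
      · rintro ⟨c, rfl⟩
        rw [LinearMap.sub_apply, LinearMap.id_apply, hf, hI3]
        funext i
        fin_cases i <;> simp <;> ring
  · -- ker (I3 + id)
    have hf : ∀ c : Fin 1 → ℤ, (Matrix.of ![![(1:ℤ)],![-1],![-1],![-1]]).mulVecLin c = ![c 0, -c 0, -c 0, -c 0] := by
      intro c
      funext i
      fin_cases i <;>
        simp [Matrix.mulVecLin_apply, Matrix.mulVec, dotProduct, Matrix.vecHead, Matrix.vecTail, Fin.sum_univ_one] <;> ring
    refine rank_of_eq_range _ ((Matrix.of ![![(1:ℤ)],![-1],![-1],![-1]]).mulVecLin) ?_ ?_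
    · intro c d h
      rw [hf, hf] at h
      have h0 := congrFun h 0
      simp at h0
      funext i; fin_cases i <;> first | exact h0
    · ext x
      simp only [LinearMap.mem_ker, LinearMap.mem_range]
      constructor
      · intro hx
        rw [LinearMap.add_apply, LinearMap.id_apply, hI3 x] at hx
        have h0 := congrFun hx 0
        have h1 := congrFun hx 1
        have h2 := congrFun hx 2
        have h3 := congrFun hx 3
        simp at h0 h1 h2 h3
        refine ⟨![x 0], ?_⟩
        rw [hf]
        funext i
        fin_cases i <;> simp <;> omega
      · rintro ⟨c, rfl⟩
        rw [LinearMap.add_apply, LinearMap.id_apply, hf, hI3]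
        funext i
        fin_cases i <;> simp <;> ring

end Stmt7
end

section
/- The graph of (−1)-classes of the dP_4 lattice (which has 10 vertices: e_1,…,e_4 and l − e_i − e_j for 1 ≤ i < j ≤ 4) is isomorphic to the Petersen graph, i.e. the Kneser graph whose vertices are the 2-element subsets of a 5-element set with edges between disjoint subsets; consequently its automorphism group has order 120 (it is isomorphic to the symmetric group S_5). -/
namespace Stmt9

/-- Intersection form of the dP₄ lattice `ℤ⁵` with basis `l, e₁, …, e₄`. -/
def dot (x y : Fin 5 → ℤ) : ℤ := x 0 * y 0 - ∑ i : Fin 4, x i.succ * y i.succ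

/-- The canonical class `K = -3l + e₁ + ⋯ + e₄`. -/
def K : Fin 5 → ℤ := fun i => if i = 0 then -3 else 1

theorem dot_comm (x y : Fin 5 → ℤ) : dot x y = dot y x := by
  unfold dot
  congr 1
  · ring
  · exact Finset.sum_congr rfl fun i _ => mul_comm _ _

/-- The type of (−1)-classes of the dP₄ lattice. -/
def NegClass := {v : Fin 5 → ℤ // dot v v = -1 ∧ dot v K = -1}

/-- The graph of (−1)-classes of the dP₄ lattice. -/
def G : SimpleGraph NegClass where
  Adj v w := v ≠ w ∧ 1 ≤ dot v.1 w.1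
  symm := ⟨by rintro v w ⟨h1, h2⟩; exact ⟨h1.symm, by rwa [dot_comm]⟩⟩
  loopless := ⟨fun v h => h.1 rfl⟩

/-- The automorphism group of the graph `G`. -/
def Aut : Subgroup (Equiv.Perm NegClass) where
  carrier := {π | ∀ v w, G.Adj (π v) (π w) ↔ G.Adj v w}
  one_mem' := fun _ _ => Iff.rfl
  mul_mem' := by
    intro a b ha hb v w
    exact (ha (b v) (b w)).trans (hb v w)
  inv_mem' := by
    intro a ha v w
    simpa using (ha (a⁻¹ v) (a⁻¹ w)).symm

/-- The Kneser graph on the 2-element subsets of a 5-element set, with edges between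
disjoint subsets (the Petersen graph). -/
def Kneser : SimpleGraph {s : Finset (Fin 5) // s.card = 2} where
  Adj s t := Disjoint s.1 t.1
  symm := ⟨fun _ _ h => h.symm⟩
  loopless := ⟨by
    intro s h
    change Disjoint s.1 s.1 at h
    have h2 := s.2
    rw [disjoint_self] at h
    rw [h] at h2
    simp at h2⟩

/-! ### Auxiliary development -/

set_option maxRecDepth 40000
set_option synthInstance.maxSize 400
set_option synthInstance.maxHeartbeats 1000000

/-- Inverse map from 2-subsets to (−1)-vectors. -/
def fromSet (s : Finset (Fin 5)) : Fin 5 → ℤ := fun k =>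
  if k = 0 then (if (4:Fin 5) ∈ s then 0 else 1)
  else if (k - 1) ∈ s then (if (4:Fin 5) ∈ s then 1 else 0)
  else (if (4:Fin 5) ∈ s then 0 else -1)

/-- Map from (−1)-vectors to 2-subsets. -/
def toSet (v : Fin 5 → ℤ) : Finset (Fin 5) :=
  Finset.univ.filter (fun i => (i = 4 ∧ v 0 = 0) ∨ (i ≠ 4 ∧ v (i+1) = 1 - v 0))

lemma classify (v : Fin 5 → ℤ) (h1 : dot v v = -1) (h2 : dot v K = -1) :
    ∃ s : Finset (Fin 5), s.card = 2 ∧ v = fromSet s := by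
  obtain ⟨b0, b1, b2, b3, b4, rfl⟩ : ∃ a b c d e, v = ![a,b,c,d,e] :=
    ⟨_,_,_,_,_, by funext k; fin_cases k <;> rfl⟩
  simp [dot, K, Fin.sum_univ_four, Fin.succ_ne_zero] at h1 h2
  have hb0l : 0 ≤ b0 := by
    nlinarith [sq_nonneg (b1-b2), sq_nonneg (b1-b3), sq_nonneg (b1-b4), sq_nonneg (b2-b3),
      sq_nonneg (b2-b4), sq_nonneg (b3-b4), sq_nonneg (b0+1), sq_nonneg b0]
  have hb0u : b0 ≤ 1 := by
    nlinarith [sq_nonneg (b1-b2), sq_nonneg (b1-b3), sq_nonneg (b1-b4), sq_nonneg (b2-b3),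
      sq_nonneg (b2-b4), sq_nonneg (b3-b4), sq_nonneg (b0-2), sq_nonneg b0]
  have hsq : b1*b1 + b2*b2 + b3*b3 + b4*b4 ≤ 2 := by nlinarith
  have h1l : -1 ≤ b1 := by nlinarith [sq_nonneg b2, sq_nonneg b3, sq_nonneg b4, sq_nonneg (b1+1)]
  have h1u : b1 ≤ 1 := by nlinarith [sq_nonneg b2, sq_nonneg b3, sq_nonneg b4, sq_nonneg (b1-1)]
  have h2l : -1 ≤ b2 := by nlinarith [sq_nonneg b1, sq_nonneg b3, sq_nonneg b4, sq_nonneg (b2+1)]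
  have h2u : b2 ≤ 1 := by nlinarith [sq_nonneg b1, sq_nonneg b3, sq_nonneg b4, sq_nonneg (b2-1)]
  have h3l : -1 ≤ b3 := by nlinarith [sq_nonneg b1, sq_nonneg b2, sq_nonneg b4, sq_nonneg (b3+1)]
  have h3u : b3 ≤ 1 := by nlinarith [sq_nonneg b1, sq_nonneg b2, sq_nonneg b4, sq_nonneg (b3-1)]
  have h4l : -1 ≤ b4 := by nlinarith [sq_nonneg b1, sq_nonneg b2, sq_nonneg b3, sq_nonneg (b4+1)]
  have h4u : b4 ≤ 1 := by nlinarith [sq_nonneg b1, sq_nonneg b2, sq_nonneg b3, sq_nonneg (b4-1)]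
  interval_cases b0 <;> interval_cases b1 <;> interval_cases b2 <;> interval_cases b3 <;>
    interval_cases b4 <;> first
      | omega
      | exact ⟨{0,4}, by decide, by decide⟩
      | exact ⟨{1,4}, by decide, by decide⟩
      | exact ⟨{2,4}, by decide, by decide⟩
      | exact ⟨{3,4}, by decide, by decide⟩
      | exact ⟨{0,1}, by decide, by decide⟩
      | exact ⟨{0,2}, by decide, by decide⟩
      | exact ⟨{0,3}, by decide, by decide⟩
      | exact ⟨{1,2}, by decide, by decide⟩
      | exact ⟨{1,3}, by decide, by decide⟩
      | exact ⟨{2,3}, by decide, by decide⟩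

lemma L2 : ∀ s : Finset (Fin 5), s.card = 2 →
    dot (fromSet s) (fromSet s) = -1 ∧ dot (fromSet s) K = -1 ∧ toSet (fromSet s) = s := by
  decide

lemma L3 : ∀ s t : Finset (Fin 5), s.card = 2 → t.card = 2 →
    ((fromSet s ≠ fromSet t ∧ 1 ≤ dot (fromSet s) (fromSet t)) ↔ Disjoint s t) := by decide

/-- The vertex equivalence. -/
def vEquiv : NegClass ≃ {s : Finset (Fin 5) // s.card = 2} where
  toFun v := ⟨toSet v.1, by
    obtain ⟨s, hs, hv⟩ := classify v.1 v.2.1 v.2.2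
    rw [hv, (L2 s hs).2.2]; exact hs⟩
  invFun s := ⟨fromSet s.1, (L2 s.1 s.2).1, (L2 s.1 s.2).2.1⟩
  left_inv v := by
    obtain ⟨s, hs, hv⟩ := classify v.1 v.2.1 v.2.2
    exact Subtype.ext (by simp only [hv, (L2 s hs).2.2])
  right_inv s := Subtype.ext ((L2 s.1 s.2).2.2)

/-- The graph isomorphism. -/
def gIso : G ≃g Kneser where
  toEquiv := vEquiv
  map_rel_iff' := by
    intro v w
    obtain ⟨s, hs, hv⟩ := classify v.1 v.2.1 v.2.2
    obtain ⟨t, ht, hw⟩ := classify w.1 w.2.1 w.2.2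
    show Disjoint (toSet v.1) (toSet w.1) ↔ (v ≠ w ∧ 1 ≤ dot v.1 w.1)
    have hne : (v ≠ w) ↔ (fromSet s ≠ fromSet t) := by
      rw [← hv, ← hw]; exact not_congr Subtype.ext_iff
    rw [hne, hv, hw, (L2 s hs).2.2, (L2 t ht).2.2, ← L3 s t hs ht]

/-- The action of `S₅` on 2-subsets. -/
def act (σ : Equiv.Perm (Fin 5)) : Equiv.Perm {s : Finset (Fin 5) // s.card = 2} :=
  Equiv.subtypeEquiv σ.finsetCongr (fun s => by simp)

def ρ : Equiv.Perm (Fin 5) →* Equiv.Perm {s : Finset (Fin 5) // s.card = 2} :=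
  MonoidHom.mk' act (by
    intro σ τ
    refine Equiv.ext fun s => Subtype.ext ?_
    show s.1.map _ = (s.1.map _).map _
    rw [Finset.map_map]
    congr 1)

lemma act_val (σ : Equiv.Perm (Fin 5)) (s : {s : Finset (Fin 5) // s.card = 2}) :
    (ρ σ s).1 = s.1.map σ.toEmbedding := rfl

lemma Pinj : ∀ σ : Equiv.Perm (Fin 5),
    (∀ s : Finset (Fin 5), s.card = 2 → s.map σ.toEmbedding = s) → σ = 1 := by decide

lemma ρ_inj : Function.Injective ρ := by
  rw [injective_iff_map_eq_one]
  intro σ h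
  refine Pinj σ fun s hs => ?_
  have h2 := congrArg (fun e : Equiv.Perm {s : Finset (Fin 5) // s.card = 2} =>
    (e ⟨s, hs⟩).1) h
  simpa [act_val] using h2

/-- The automorphism subgroup on the Kneser side. -/
def AutK : Subgroup (Equiv.Perm {s : Finset (Fin 5) // s.card = 2}) where
  carrier := {π | ∀ v w, Kneser.Adj (π v) (π w) ↔ Kneser.Adj v w}
  one_mem' := fun _ _ => Iff.rfl
  mul_mem' := by
    intro a b ha hb v w
    exact (ha (b v) (b w)).trans (hb v w)
  inv_mem' := by
    intro a ha v w
    simpa using (ha (a⁻¹ v) (a⁻¹ w)).symm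

lemma B : ∀ p1 p2 p3 p4 : {s : Finset (Fin 5) // s.card = 2},
    (p1 ≠ p2 ∧ p1 ≠ p3 ∧ p1 ≠ p4 ∧ p2 ≠ p3 ∧ p2 ≠ p4 ∧ p3 ≠ p4) →
    ((p1.1 ∩ p2.1).Nonempty ∧ (p1.1 ∩ p3.1).Nonempty ∧ (p1.1 ∩ p4.1).Nonempty ∧
     (p2.1 ∩ p3.1).Nonempty ∧ (p2.1 ∩ p4.1).Nonempty ∧ (p3.1 ∩ p4.1).Nonempty) →
    (p1.1 ∩ p2.1 ∩ p3.1 ∩ p4.1).card = 1 := by decide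

lemma helper (π : Equiv.Perm {s : Finset (Fin 5) // s.card = 2})
    (hM : ∀ s t : {s : Finset (Fin 5) // s.card = 2},
      ((π s).1 ∩ (π t).1).Nonempty ↔ (s.1 ∩ t.1).Nonempty)
    (i a b c d : Fin 5)
    (hd : i ≠ a ∧ i ≠ b ∧ i ≠ c ∧ i ≠ d ∧ a ≠ b ∧ a ≠ c ∧ a ≠ d ∧ b ≠ c ∧ b ≠ d ∧ c ≠ d)
    (hu : ∀ x : Fin 5, x = i ∨ x = a ∨ x = b ∨ x = c ∨ x = d) :
    ∃ c0 : Fin 5, ∀ s : {s : Finset (Fin 5) // s.card = 2}, i ∈ s.1 → c0 ∈ (π s).1 := by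
  obtain ⟨hia, hib, hic, hid, hab, hac, had, hbc, hbd, hcd⟩ := hd
  have pairne : ∀ x y : Fin 5, i ≠ x → i ≠ y → x ≠ y → ({i,x} : Finset (Fin 5)) ≠ {i,y} := by
    intro x y hix hiy hxy he
    have hx : x ∈ ({i,y} : Finset (Fin 5)) := he ▸ (by simp)
    simp only [Finset.mem_insert, Finset.mem_singleton] at hx
    rcases hx with rfl | rfl
    · exact hix rfl
    · exact hxy rfl
  set p1 : {s : Finset (Fin 5) // s.card = 2} := ⟨{i,a}, Finset.card_pair hia⟩ with hp1
  set p2 : {s : Finset (Fin 5) // s.card = 2} := ⟨{i,b}, Finset.card_pair hib⟩ with hp2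
  set p3 : {s : Finset (Fin 5) // s.card = 2} := ⟨{i,c}, Finset.card_pair hic⟩ with hp3
  set p4 : {s : Finset (Fin 5) // s.card = 2} := ⟨{i,d}, Finset.card_pair hid⟩ with hp4
  have hnei : ∀ (x y : Fin 5) (hix : i ≠ x) (hiy : i ≠ y), x ≠ y →
      (⟨{i,x}, Finset.card_pair hix⟩ : {s : Finset (Fin 5) // s.card = 2}) ≠
        ⟨{i,y}, Finset.card_pair hiy⟩ := by
    intro x y hix hiy hxy he
    exact pairne x y hix hiy hxy (congrArg Subtype.val he)
  have hcard := B (π p1) (π p2) (π p3) (π p4)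
    ⟨π.injective.ne (hnei a b hia hib hab), π.injective.ne (hnei a c hia hic hac),
     π.injective.ne (hnei a d hia hid had), π.injective.ne (hnei b c hib hic hbc),
     π.injective.ne (hnei b d hib hid hbd), π.injective.ne (hnei c d hic hid hcd)⟩
    ⟨(hM _ _).2 ⟨i, by simp [p1, p2]⟩, (hM _ _).2 ⟨i, by simp [p1, p3]⟩, (hM _ _).2 ⟨i, by simp [p1, p4]⟩,
     (hM _ _).2 ⟨i, by simp [p2, p3]⟩, (hM _ _).2 ⟨i, by simp [p2, p4]⟩, (hM _ _).2 ⟨i, by simp [p3, p4]⟩⟩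
  obtain ⟨c0, hc0⟩ := Finset.card_eq_one.1 hcard
  have hc0mem : c0 ∈ (π p1).1 ∩ (π p2).1 ∩ (π p3).1 ∩ (π p4).1 := by
    rw [hc0]; exact Finset.mem_singleton_self c0
  simp only [Finset.mem_inter] at hc0mem
  refine ⟨c0, fun s hs => ?_⟩
  obtain ⟨x, y, hxy, hsxy⟩ := Finset.card_eq_two.1 s.2
  have hi : i = x ∨ i = y := by rw [hsxy] at hs; simpa using hs
  obtain ⟨e, he1, he2⟩ : ∃ e, i ≠ e ∧ s.1 = {i, e} := by
    rcases hi with rfl | rfl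
    · exact ⟨y, hxy, hsxy⟩
    · exact ⟨x, fun h => hxy h.symm, by rw [hsxy, Finset.pair_comm]⟩
  rcases hu e with rfl | h | h | h | h
  · exact absurd rfl he1
  · have : s = p1 := Subtype.ext (by rw [he2, h])
    rw [this]; exact hc0mem.1.1.1
  · have : s = p2 := Subtype.ext (by rw [he2, h])
    rw [this]; exact hc0mem.1.1.2
  · have : s = p3 := Subtype.ext (by rw [he2, h])
    rw [this]; exact hc0mem.1.2
  · have : s = p4 := Subtype.ext (by rw [he2, h])
    rw [this]; exact hc0mem.2

lemma exAB : ∀ i j : Fin 5, i ≠ j →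
    ∃ a b : Fin 5, a ≠ b ∧ a ≠ i ∧ a ≠ j ∧ b ≠ i ∧ b ≠ j := by decide

lemma surj : ∀ π ∈ AutK, ∃ σ : Equiv.Perm (Fin 5), ρ σ = π := by
  intro π hπ
  have hπ' : ∀ s t, Disjoint (π s).1 (π t).1 ↔ Disjoint s.1 t.1 := hπ
  have hM : ∀ s t : {s : Finset (Fin 5) // s.card = 2},
      ((π s).1 ∩ (π t).1).Nonempty ↔ (s.1 ∩ t.1).Nonempty := by
    intro s t
    rw [← Finset.not_disjoint_iff_nonempty_inter, ← Finset.not_disjoint_iff_nonempty_inter]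
    exact not_congr (hπ' s t)
  have key : ∀ i : Fin 5, ∃ c : Fin 5,
      ∀ s : {s : Finset (Fin 5) // s.card = 2}, i ∈ s.1 → c ∈ (π s).1 := by
    intro i
    refine helper π hM i (i+1) (i+2) (i+3) (i+4) ?_ ?_
    · revert i; decide
    · revert i; decide
  choose σ hσ using key
  have hne : ∀ i j : Fin 5, i ≠ j → σ i ≠ σ j := by
    intro i j hij
    obtain ⟨a, b, hab, hai, haj, hbi, hbj⟩ := exAB i j hij
    have hd : Disjoint ({i,a} : Finset (Fin 5)) {j,b} := by
      rw [Finset.disjoint_left]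
      intro x hx hx'
      simp only [Finset.mem_insert, Finset.mem_singleton] at hx hx'
      rcases hx with rfl | rfl <;> rcases hx' with rfl | rfl <;>
        first
          | exact hij rfl
          | exact hbi rfl
          | exact haj rfl
          | exact hab rfl
          | exact hai rfl
          | exact hbj rfl
    set s : {s : Finset (Fin 5) // s.card = 2} :=
      ⟨{i,a}, Finset.card_pair (fun h => hai h.symm)⟩ with hs
    set t : {s : Finset (Fin 5) // s.card = 2} :=
      ⟨{j,b}, Finset.card_pair (fun h => hbj h.symm)⟩ with ht
    have h1 : σ i ∈ (π s).1 := hσ i s (by simp [hs])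
    have h2 : σ j ∈ (π t).1 := hσ j t (by simp [ht])
    have hd2 : Disjoint (π s).1 (π t).1 := (hπ' s t).2 hd
    intro he
    rw [he] at h1
    exact (Finset.disjoint_left.1 hd2 h1) h2
  have hinj : Function.Injective σ := fun i j h => by
    by_contra hij
    exact hne i j hij h
  have main : ∀ s : {s : Finset (Fin 5) // s.card = 2}, (π s).1 = s.1.image σ := by
    intro s
    obtain ⟨x, y, hxy, hsxy⟩ := Finset.card_eq_two.1 s.2
    have h1 : σ x ∈ (π s).1 := hσ x s (by rw [hsxy]; simp)
    have h2 : σ y ∈ (π s).1 := hσ y s (by rw [hsxy]; simp)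
    have hsub : ({σ x, σ y} : Finset (Fin 5)) ⊆ (π s).1 := by
      intro z hz
      simp only [Finset.mem_insert, Finset.mem_singleton] at hz
      rcases hz with rfl | rfl <;> assumption
    have heq : ({σ x, σ y} : Finset (Fin 5)) = (π s).1 :=
      Finset.eq_of_subset_of_card_le hsub
        (by simp [(π s).2, Finset.card_pair (hne x y hxy)])
    rw [← heq, hsxy, Finset.image_insert, Finset.image_singleton]
  refine ⟨Equiv.ofBijective σ (Finite.injective_iff_bijective.1 hinj), ?_⟩
  refine Equiv.ext fun s => Subtype.ext ?_
  rw [act_val, Finset.map_eq_image, main s]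
  rfl

lemma range_eq : ρ.range = AutK := by
  apply le_antisymm
  · rintro _ ⟨σ, rfl⟩
    intro s t
    show Disjoint (ρ σ s).1 (ρ σ t).1 ↔ Disjoint s.1 t.1
    rw [act_val, act_val]
    exact Finset.disjoint_map _
  · intro π hπ
    exact surj π hπ

/-- Transfer of permutation groups along `vEquiv`. -/
def Φ : Equiv.Perm NegClass ≃* Equiv.Perm {s : Finset (Fin 5) // s.card = 2} where
  toFun π := (vEquiv.symm.trans (π.trans vEquiv))
  invFun π := (vEquiv.trans (π.trans vEquiv.symm))
  left_inv π := by ext v; simp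
  right_inv π := by ext s; simp
  map_mul' π π' := by ext s; simp [Equiv.Perm.mul_apply]

lemma mem_iff (π : Equiv.Perm NegClass) : Φ π ∈ AutK ↔ π ∈ Aut := by
  have e1 : ∀ a b : NegClass, Kneser.Adj (vEquiv a) (vEquiv b) ↔ G.Adj a b :=
    fun a b => gIso.map_rel_iff
  have hApp : ∀ s, Φ π s = vEquiv (π (vEquiv.symm s)) := fun s => rfl
  constructor
  · intro h v w
    have h2 := h (vEquiv v) (vEquiv w)
    rw [hApp, hApp, vEquiv.symm_apply_apply, vEquiv.symm_apply_apply, e1, e1] at h2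
    exact h2
  · intro h s t
    have h' : ∀ v w, G.Adj (π v) (π w) ↔ G.Adj v w := h
    rw [hApp, hApp, e1]
    rw [show Kneser.Adj s t ↔ G.Adj (vEquiv.symm s) (vEquiv.symm t) from by
      rw [← e1, vEquiv.apply_symm_apply, vEquiv.apply_symm_apply]]
    exact h' _ _

lemma map_eq : Subgroup.map Φ.toMonoidHom Aut = AutK := by
  ext π
  rw [Subgroup.mem_map]
  constructor
  · rintro ⟨a, ha, rfl⟩
    exact (mem_iff a).2 ha
  · intro h
    refine ⟨Φ.symm π, ?_, Φ.apply_symm_apply π⟩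
    rw [← mem_iff, Φ.apply_symm_apply]
    exact h

noncomputable def eAut : ↥Aut ≃* Equiv.Perm (Fin 5) :=
  ((Φ.subgroupMap Aut).trans (MulEquiv.subgroupCongr map_eq)).trans
    ((MulEquiv.subgroupCongr range_eq.symm).trans (MonoidHom.ofInjective ρ_inj).symm)

/-- The graph of (−1)-classes of the dP₄ lattice has 10 vertices and is isomorphic to
the Petersen graph; consequently its automorphism group has order 120 and is
isomorphic to the symmetric group `S₅`. -/
theorem statement9 :
    Nat.card NegClass = 10 ∧
    Nonempty (G ≃g Kneser) ∧
    Nat.card ↥Aut = 120 ∧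
    Nonempty (↥Aut ≃* Equiv.Perm (Fin 5)) := by
  refine ⟨?_, ⟨gIso⟩, ?_, ⟨eAut⟩⟩
  · rw [Nat.card_congr vEquiv, Nat.card_eq_fintype_card]
    decide
  · rw [Nat.card_congr eAut.toEquiv, Nat.card_eq_fintype_card]
    simp [Fintype.card_perm, Fintype.card_fin]
    rfl

end Stmt9
end
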